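/- arXiv:2208.01680 — 8 statements merged into one kernel-verified Lean document; each statement's English description precedes it below -/
import Mathlib

section
/- Three Gap Theorem: For any irrational α and N ∈ ℕ, if 0 = y_0 < y_1 < ... < y_{N-1} < 1 is the ordered list of fractional parts {mα} for 0 ≤ m < N, then the set of gaps {y_{j+1} - y_j : 0 ≤ j ≤ N-2} ∪ {1 - y_{N-1}} has cardinality at most 3. -/
/-- The cyclic gap after the point `{m α}` among the points `{0α}, …, {(N-1)α}` on ℝ/ℤ:
the infimum of positive circular distances from `{m α}` to the other points. -/
noncomputable def gapAt (α : ℝ) (N : ℕ) (m : ℕ) : ℝ :=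
  sInf {d : ℝ | 0 < d ∧ ∃ m' : ℕ, m' < N ∧ Int.fract ((m' : ℝ) * α - (m : ℝ) * α) = d}

open Classical in
/-- The set of distinct cyclic gap lengths of the configuration `{0α}, …, {(N-1)α}`. -/
noncomputable def gapSet (α : ℝ) (N : ℕ) : Finset ℝ :=
  (Finset.range N).image (gapAt α N)

/-- The multiset of cyclic gaps of the configuration `{0α}, …, {(N-1)α}`. -/
noncomputable def gapMult (α : ℝ) (N : ℕ) : Multiset ℝ :=
  (Multiset.range N).map (gapAt α N)

/-- Cyclic extension of the ordering permutation `u` to integer indices, mod `N`. -/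
def uc (N : ℕ) (u : ℕ → ℕ) (j : ℤ) : ℕ := u ((j % (N : ℤ)).toNat)

variable {α : ℝ}

lemma g_pos (hα : Irrational α) {k : ℤ} (hk : k ≠ 0) : 0 < Int.fract ((k:ℝ) * α) := by
  rcases lt_or_eq_of_le (Int.fract_nonneg ((k:ℝ)*α)) with h | h
  · exact h
  · exfalso
    have h2 : (k:ℝ) * α = ⌊(k:ℝ)*α⌋ := by
      have := Int.self_sub_floor ((k:ℝ)*α)
      rw [← h] at this; linarith
    exact (hα.intCast_mul hk).ne_int _ h2

lemma g_inj (hα : Irrational α) {j k : ℤ}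
    (h : Int.fract ((j:ℝ) * α) = Int.fract ((k:ℝ) * α)) : j = k := by
  by_contra hne
  have hk : j - k ≠ 0 := sub_ne_zero.2 hne
  have h2 : ((j - k : ℤ):ℝ) * α = ((⌊(j:ℝ)*α⌋ - ⌊(k:ℝ)*α⌋ : ℤ) : ℝ) := by
    have hj := Int.self_sub_floor ((j:ℝ)*α)
    have hk' := Int.self_sub_floor ((k:ℝ)*α)
    push_cast
    nlinarith [hj, hk', h]
  exact (hα.intCast_mul hk).ne_int _ h2

/-- reduce fract of a difference to fracts -/
lemma g_sub (j k : ℤ) :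
    Int.fract (((j - k : ℤ):ℝ) * α) = Int.fract (Int.fract ((j:ℝ)*α) - Int.fract ((k:ℝ)*α)) := by
  have : ((j - k : ℤ):ℝ) * α =
      (Int.fract ((j:ℝ)*α) - Int.fract ((k:ℝ)*α)) + ((⌊(j:ℝ)*α⌋ - ⌊(k:ℝ)*α⌋ : ℤ) : ℝ) := by
    have hj := Int.self_sub_floor ((j:ℝ)*α)
    have hk' := Int.self_sub_floor ((k:ℝ)*α)
    push_cast
    linarith
  rw [this, Int.fract_add_intCast]

lemma g_add (j k : ℤ) :
    Int.fract (((j + k : ℤ):ℝ) * α) = Int.fract (Int.fract ((j:ℝ)*α) + Int.fract ((k:ℝ)*α)) := by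
  have : ((j + k : ℤ):ℝ) * α =
      (Int.fract ((j:ℝ)*α) + Int.fract ((k:ℝ)*α)) + ((⌊(j:ℝ)*α⌋ + ⌊(k:ℝ)*α⌋ : ℤ) : ℝ) := by
    have hj := Int.self_sub_floor ((j:ℝ)*α)
    have hk' := Int.self_sub_floor ((k:ℝ)*α)
    push_cast
    linarith
  rw [this, Int.fract_add_intCast]

lemma fract_of_mem (t : ℝ) (h0 : 0 ≤ t) (h1 : t < 1) : Int.fract t = t := Int.fract_eq_self.2 ⟨h0, h1⟩

lemma fract_of_neg (t : ℝ) (h0 : -1 ≤ t) (h1 : t < 0) : Int.fract t = t + 1 := by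
  rw [← Int.fract_add_intCast t 1]
  push_cast
  exact Int.fract_eq_self.2 ⟨by linarith, by linarith⟩

def Sset (α : ℝ) (N m : ℕ) : Set ℝ :=
  {d : ℝ | 0 < d ∧ ∃ m' : ℕ, m' < N ∧ Int.fract ((m' : ℝ) * α - (m : ℝ) * α) = d}

lemma mem_Sset (hα : Irrational α) {N m : ℕ} {k : ℤ} (hk0 : k ≠ 0)
    (hk1 : -(m:ℤ) ≤ k) (hk2 : k + m < N) : Int.fract ((k:ℝ)*α) ∈ Sset α N m := by
  refine ⟨g_pos hα hk0, (k + (m:ℤ)).toNat, ?_, ?_⟩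
  · omega
  · have hc : (((k + (m:ℤ)).toNat : ℕ) : ℝ) = (k:ℝ) + (m:ℝ) := by
      have h := Int.toNat_of_nonneg (show 0 ≤ k + (m:ℤ) by omega)
      have h2 := congrArg (fun z : ℤ => (z : ℝ)) h
      push_cast at h2
      exact h2
    rw [hc]; ring_nf

lemma Sset_elim {N m : ℕ} {d : ℝ} (hd : d ∈ Sset α N m) :
    ∃ k : ℤ, k ≠ 0 ∧ -(m:ℤ) ≤ k ∧ k + m < N ∧ d = Int.fract ((k:ℝ)*α) := by
  obtain ⟨hpos, m', hm', hval⟩ := hd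
  refine ⟨(m' : ℤ) - m, ?_, by omega, by omega, ?_⟩
  · intro h
    have : (m' : ℤ) = m := by omega
    have hmm : (m' : ℝ) = m := by exact_mod_cast this
    rw [hmm] at hval
    simp at hval
    linarith [hval ▸ hpos]
  · rw [← hval]
    congr 1
    push_cast
    ring

lemma gapAt_eq (hα : Irrational α) {N m : ℕ} {v : ℝ} (hv : v ∈ Sset α N m)
    (hlb : ∀ k : ℤ, k ≠ 0 → -(m:ℤ) ≤ k → k + m < N → v ≤ Int.fract ((k:ℝ)*α)) :
    gapAt α N m = v := by
  show sInf (Sset α N m) = v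
  have hbdd : BddBelow (Sset α N m) := ⟨0, fun d hd => le_of_lt hd.1⟩
  apply le_antisymm
  · exact csInf_le hbdd hv
  · apply le_csInf ⟨v, hv⟩
    intro d hd
    obtain ⟨k, h0, h1, h2, rfl⟩ := Sset_elim hd
    exact hlb k h0 h1 h2

lemma fract_of_ge1 (t : ℝ) (h1 : 1 ≤ t) (h2 : t < 2) : Int.fract t = t - 1 := by
  have h := Int.fract_sub_intCast t (1 : ℤ)
  push_cast at h
  rw [← h]
  exact fract_of_mem _ (by linarith) (by linarith)

lemma g_neg (hα : Irrational α) {j : ℤ} (hj : j ≠ 0) :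
    Int.fract (((-j : ℤ):ℝ)*α) = 1 - Int.fract (((j:ℤ):ℝ)*α) := by
  have h := g_sub (α := α) 0 j
  have h0 : ((0 - j : ℤ)) = -j := by ring
  rw [h0] at h
  simp only [Int.cast_zero, zero_mul, Int.fract_zero, zero_sub] at h
  rw [h, fract_of_neg _ (by linarith [Int.fract_lt_one ((j:ℝ)*α)])
    (by simpa using g_pos hα hj)]
  ring

lemma three_vals (hα : Irrational α) {N : ℕ} {a b : ℤ}
    (ha1 : 1 ≤ a) (haN : a < N) (hb1 : 1 ≤ b) (hbN : b < N)
    (hamin : ∀ k : ℤ, 1 ≤ k → k < N → Int.fract ((a:ℝ)*α) ≤ Int.fract ((k:ℝ)*α))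
    (hbmax : ∀ k : ℤ, 1 ≤ k → k < N → Int.fract ((k:ℝ)*α) ≤ Int.fract ((b:ℝ)*α))
    {m : ℕ} (hm : m < N) :
    gapAt α N m = Int.fract ((a:ℝ)*α) ∨
    gapAt α N m = 1 - Int.fract ((b:ℝ)*α) ∨
    gapAt α N m = Int.fract ((a:ℝ)*α) + 1 - Int.fract ((b:ℝ)*α) := by
  set δ := Int.fract ((a:ℝ)*α) with hδ
  set ε := Int.fract ((b:ℝ)*α) with hε
  have hδ0 : 0 < δ := g_pos hα (by omega)
  have hδ1 : δ < 1 := Int.fract_lt_one _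
  have hε0 : 0 < ε := g_pos hα (by omega)
  have hε1 : ε < 1 := Int.fract_lt_one _
  by_cases h1 : (m:ℤ) + a < N
  · -- Case 1 : gap is δ
    left
    apply gapAt_eq hα (mem_Sset hα (by omega) (by omega) (by omega))
    intro k hk0 hk1 hk2
    rcases le_or_gt 1 k with hk | hk
    · exact hamin k hk (by omega)
    · -- k negative
      have hkneg := g_neg hα (j := -k) (by omega)
      rw [neg_neg] at hkneg
      rw [hkneg]
      set fj := Int.fract (((-k : ℤ):ℝ)*α) with hfj
      by_contra hcon
      push_neg at hcon
      -- fj > 1 - δ ; consider -k + a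
      have hsum : Int.fract (((-k + a : ℤ):ℝ)*α) = fj + δ - 1 := by
        rw [g_add, fract_of_ge1 _ (by linarith) (by
          linarith [Int.fract_lt_one (((-k:ℤ):ℝ)*α)])]
      have hmin := hamin (-k + a) (by omega) (by omega)
      rw [hsum] at hmin
      have : fj < 1 := Int.fract_lt_one _
      linarith
  · by_cases h2 : b ≤ (m:ℤ)
    · -- Case 2 : gap is 1 - ε
      right; left
      have hvb := g_neg hα (j := b) (by omega)
      rw [← hvb]
      apply gapAt_eq hα (mem_Sset hα (by omega) (by omega) (by omega))
      intro k hk0 hk1 hk2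
      rcases le_or_gt 1 k with hk | hk
      · -- k positive
        rw [hvb]
        by_contra hcon
        push_neg at hcon
        have hsum : Int.fract (((k + b : ℤ):ℝ)*α) = Int.fract ((k:ℝ)*α) + ε := by
          rw [g_add, fract_of_mem _ (by linarith [Int.fract_nonneg ((k:ℝ)*α)]) (by linarith)]
        have hmax := hbmax (k + b) (by omega) (by omega)
        rw [hsum] at hmax
        have := g_pos hα hk0
        linarith
      · -- k negative
        have hkneg := g_neg hα (j := -k) (by omega)
        rw [neg_neg] at hkneg
        rw [hkneg, hvb]
        have := hbmax (-k) (by omega) (by omega)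
        linarith
    · -- Case 3 : gap is δ + 1 - ε
      right; right
      push_neg at h1 h2
      have hab : a ≠ b := by
        intro h
        have h3 := hamin m (by omega) (by exact_mod_cast hm)
        have h4 := hbmax m (by omega) (by exact_mod_cast hm)
        have hεδ : ε = δ := by rw [hε, hδ, h]
        have heq : Int.fract ((((m:ℤ)):ℝ)*α) = Int.fract ((a:ℝ)*α) := by
          rw [← hδ]; exact le_antisymm (h4.trans hεδ.le) h3
        have := g_inj hα heq
        omega
      have hδε : δ < ε := by
        rcases lt_or_eq_of_le (hamin b hb1 hbN) with h | h
        · exact h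
        · exact absurd (g_inj hα h) hab
      have hv : Int.fract (((a - b : ℤ):ℝ)*α) = δ + 1 - ε := by
        rw [g_sub, fract_of_neg _ (by linarith) (by linarith)]
        ring
      rw [← hv]
      apply gapAt_eq hα (mem_Sset hα (by omega) (by omega) (by omega))
      intro k hk0 hk1 hk2
      rw [hv]
      rcases le_or_gt 1 k with hk | hk
      · -- k positive, k < a
        by_contra hcon
        push_neg at hcon
        have hka : k ≠ a := by omega
        have hlt : δ < Int.fract ((k:ℝ)*α) :=
          lt_of_le_of_ne (hamin k hk (by omega)) (fun h => hka (g_inj hα h.symm))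
        have hsum : Int.fract (((a - k : ℤ):ℝ)*α) = δ - Int.fract ((k:ℝ)*α) + 1 := by
          rw [g_sub, fract_of_neg _ (by linarith [Int.fract_lt_one ((k:ℝ)*α)]) (by linarith)]
        have hmax := hbmax (a - k) (by omega) (by omega)
        rw [hsum] at hmax
        linarith
      · -- k negative, -k < b
        have hkneg := g_neg hα (j := -k) (by omega)
        rw [neg_neg] at hkneg
        rw [hkneg]
        set fj := Int.fract (((-k : ℤ):ℝ)*α) with hfj
        by_contra hcon
        push_neg at hcon
        have hjb : -k ≠ b := by omega
        have hlt : fj < ε :=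
          lt_of_le_of_ne (hbmax (-k) (by omega) (by omega)) (fun h => hjb (g_inj hα h))
        have hsum : Int.fract (((b - -k : ℤ):ℝ)*α) = ε - fj := by
          rw [g_sub, fract_of_mem _ (by linarith) (by
            linarith [Int.fract_nonneg (((-k:ℤ):ℝ)*α)])]
        have hmin := hamin (b - -k) (by omega) (by omega)
        rw [hsum] at hmin
        linarith


theorem three_gap_theorem (α : ℝ) (hα : Irrational α) (N : ℕ) :
    (gapSet α N).card ≤ 3 := by
  by_cases hN : N ≤ 3
  · calc (gapSet α N).card ≤ (Finset.range N).card := Finset.card_image_le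
      _ = N := Finset.card_range N
      _ ≤ 3 := hN
  · push_neg at hN
    have hne : (Finset.Ico 1 N).Nonempty := ⟨1, Finset.mem_Ico.2 ⟨le_refl _, by omega⟩⟩
    obtain ⟨a, haI, hamin⟩ := Finset.exists_min_image (Finset.Ico 1 N)
      (fun k : ℕ => Int.fract ((k:ℝ)*α)) hne
    obtain ⟨b, hbI, hbmax⟩ := Finset.exists_max_image (Finset.Ico 1 N)
      (fun k : ℕ => Int.fract ((k:ℝ)*α)) hne
    rw [Finset.mem_Ico] at haI hbI
    have hcast : ∀ k : ℤ, 0 ≤ k → (((k.toNat : ℕ)) : ℝ) = (k : ℝ) := by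
      intro k hk
      have h : (k.toNat : ℤ) = k := Int.toNat_of_nonneg hk
      have h2 := congrArg (fun z : ℤ => (z : ℝ)) h
      push_cast at h2
      exact h2
    have hamin' : ∀ k : ℤ, 1 ≤ k → k < N →
        Int.fract (((a:ℤ):ℝ)*α) ≤ Int.fract ((k:ℝ)*α) := by
      intro k h1 h2
      have h3 := hamin k.toNat (Finset.mem_Ico.2 ⟨by omega, by omega⟩)
      rw [hcast k (by omega)] at h3
      have hca : (((a:ℕ)):ℝ) = ((a:ℤ):ℝ) := by push_cast; ring
      rw [← hca]
      exact h3
    have hbmax' : ∀ k : ℤ, 1 ≤ k → k < N →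
        Int.fract ((k:ℝ)*α) ≤ Int.fract (((b:ℤ):ℝ)*α) := by
      intro k h1 h2
      have h3 := hbmax k.toNat (Finset.mem_Ico.2 ⟨by omega, by omega⟩)
      rw [hcast k (by omega)] at h3
      have hcb : (((b:ℕ)):ℝ) = ((b:ℤ):ℝ) := by push_cast; ring
      rw [← hcb]
      exact h3
    set δ := Int.fract (((a:ℤ):ℝ)*α)
    set ε := Int.fract (((b:ℤ):ℝ)*α)
    have hsub : gapSet α N ⊆ ({δ, 1 - ε, δ + 1 - ε} : Finset ℝ) := by
      intro x hx
      simp only [gapSet, Finset.mem_image, Finset.mem_range] at hx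
      obtain ⟨m, hm, rfl⟩ := hx
      rcases three_vals hα (by exact_mod_cast haI.1) (by exact_mod_cast haI.2)
        (by exact_mod_cast hbI.1) (by exact_mod_cast hbI.2) hamin' hbmax' hm with h | h | h
      · rw [h]; exact Finset.mem_insert_self _ _
      · rw [h]; exact Finset.mem_insert_of_mem (Finset.mem_insert_self _ _)
      · rw [h]
        exact Finset.mem_insert_of_mem (Finset.mem_insert_of_mem (Finset.mem_singleton_self _))
    calc (gapSet α N).card ≤ ({δ, 1 - ε, δ + 1 - ε} : Finset ℝ).card :=
          Finset.card_le_card hsub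
      _ ≤ 3 := by
          apply le_trans (Finset.card_insert_le _ _)
          have := Finset.card_insert_le (1 - ε) ({δ + 1 - ε} : Finset ℝ)
          simp at this ⊢
          omega
end

section
/- If among the three gap lengths all three occur, then the largest gap length equals the sum of the two smaller gap lengths. -/
theorem largest_gap_is_sum (α : ℝ) (hα : Irrational α) (N : ℕ)
    (Δ₁ Δ₂ Δ₃ : ℝ) (h12 : Δ₁ < Δ₂) (h23 : Δ₂ < Δ₃)
    (hset : gapSet α N = {Δ₁, Δ₂, Δ₃}) :
    Δ₃ = Δ₁ + Δ₂ := by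
  classical
  set fr : ℤ → ℝ := fun k => Int.fract ((k : ℝ) * α) with hfrdef
  -- basic facts about fr
  have hpos : ∀ k : ℤ, k ≠ 0 → 0 < fr k := by
    intro k hk
    have h0 : fr k ≠ 0 := by
      intro h0
      have hirr : Irrational ((k : ℝ) * α) := hα.intCast_mul hk
      have h0' : (k : ℝ) * α = (⌊(k : ℝ) * α⌋ : ℤ) := by
        simp only [hfrdef, Int.fract] at h0
        linarith
      exact hirr.ne_int _ h0'
    exact lt_of_le_of_ne (Int.fract_nonneg _) (Ne.symm h0)
  have hlt1 : ∀ k : ℤ, fr k < 1 := fun k => Int.fract_lt_one _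
  have hne : ∀ k l : ℤ, k ≠ l → fr k ≠ fr l := by
    intro k l hkl h
    rcases Int.fract_eq_fract.mp h with ⟨z, hz⟩
    have : ((k - l : ℤ) : ℝ) * α = (z : ℤ) := by push_cast; linarith
    exact (hα.intCast_mul (sub_ne_zero.mpr hkl)).ne_int z this
  have hsub : ∀ k l : ℤ, fr (k - l) = Int.fract (fr k - fr l) := by
    intro k l
    apply Int.fract_eq_fract.mpr
    refine ⟨⌊(k : ℝ) * α⌋ - ⌊(l : ℝ) * α⌋, ?_⟩
    simp only [hfrdef, Int.fract]
    push_cast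
    ring
  have hfr_negfract : ∀ u : ℝ, -1 < u → u < 0 → Int.fract u = u + 1 := by
    intro u h1 h2
    have : Int.fract u = Int.fract (u + 1) := by
      rw [show u + 1 = u + (1 : ℤ) by push_cast; ring, Int.fract_add_intCast]
    rw [this, Int.fract_eq_self.mpr ⟨by linarith, by linarith⟩]
  have hleft : ∀ k : ℤ, k < 0 → fr k = 1 - fr (-k) := by
    intro k hk
    have h0 : Int.fract (((-k : ℤ) : ℝ) * α) ≠ 0 := ne_of_gt (hpos (-k) (by omega))
    have : ((k : ℝ)) * α = -(((-k : ℤ) : ℝ) * α) := by push_cast; ring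
    rw [hfrdef]
    simp only []
    rw [this, Int.fract_neg h0]
  -- N ≥ 3
  have hN3 : 3 ≤ N := by
    have hcard : ({Δ₁, Δ₂, Δ₃} : Finset ℝ).card = 3 := by
      rw [Finset.card_insert_of_notMem (by simp [h12.ne, (h12.trans h23).ne]),
        Finset.card_insert_of_notMem (by simp [h23.ne]), Finset.card_singleton]
    have h' : ({Δ₁, Δ₂, Δ₃} : Finset ℝ).card ≤ N := by
      rw [← hset, gapSet]
      exact le_trans Finset.card_image_le (le_of_eq (Finset.card_range N))
    rw [hcard] at h'
    exact h'
  -- choose a and b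
  have hIne : (Finset.Ico (1 : ℤ) N).Nonempty := ⟨1, by simp; omega⟩
  obtain ⟨a, haI, hamin⟩ := (Finset.Ico (1 : ℤ) N).exists_min_image fr hIne
  obtain ⟨b, hbI, hbmax⟩ := (Finset.Ico (1 : ℤ) N).exists_max_image fr hIne
  rw [Finset.mem_Ico] at haI hbI
  have hamin' : ∀ k : ℤ, 1 ≤ k → k < N → fr a ≤ fr k := fun k h1 h2 =>
    hamin k (Finset.mem_Ico.mpr ⟨h1, h2⟩)
  have hbmax' : ∀ k : ℤ, 1 ≤ k → k < N → fr k ≤ fr b := fun k h1 h2 =>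
    hbmax k (Finset.mem_Ico.mpr ⟨h1, h2⟩)
  set g₁ : ℝ := fr a with hg1
  set g₂ : ℝ := 1 - fr b with hg2
  have hg1pos : 0 < g₁ := hpos a (by omega)
  have hg2pos : 0 < g₂ := by have := hlt1 b; simp [hg2]; linarith
  -- fr a < fr b
  have hab : fr a < fr b := by
    obtain ⟨k, hkI, hka⟩ : ∃ k : ℤ, (1 ≤ k ∧ k < N) ∧ k ≠ a := by
      by_cases h : a = 1
      · exact ⟨2, ⟨by omega, by omega⟩, by omega⟩
      · exact ⟨1, ⟨le_refl _, by omega⟩, fun h' => h h'.symm⟩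
    have h1 : fr a ≤ fr k := hamin' k hkI.1 hkI.2
    have h2 : fr k ≤ fr b := hbmax' k hkI.1 hkI.2
    have h3 : fr a ≠ fr k := hne a k (Ne.symm hka)
    exact lt_of_lt_of_le (lt_of_le_of_ne h1 h3) h2
  -- key lemmas
  have K1 : ∀ k : ℤ, 1 ≤ k → k < a → g₁ + g₂ ≤ fr k := by
    intro k h1 h2
    have hak : fr a < fr k :=
      lt_of_le_of_ne (hamin' k h1 (by omega)) (hne a k (by omega))
    have h3 : fr (a - k) = fr a - fr k + 1 := by
      rw [hsub a k, hfr_negfract _ (by have := hlt1 k; have := Int.fract_nonneg ((a:ℝ)*α); simp [hfrdef] at *; linarith) (by linarith)]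
    have h4 : fr (a - k) ≤ fr b := hbmax' (a - k) (by omega) (by omega)
    rw [h3] at h4
    simp only [hg1, hg2]
    linarith
  have K2 : ∀ k : ℤ, 1 ≤ k → k < b → g₁ + g₂ ≤ 1 - fr k := by
    intro k h1 h2
    have hkb : fr k < fr b :=
      lt_of_le_of_ne (hbmax' k h1 (by omega)) (hne k b (by omega))
    have h3 : fr (b - k) = fr b - fr k := by
      rw [hsub b k, Int.fract_eq_self.mpr ⟨by linarith, by have := hpos k (by omega); have := hlt1 b; linarith⟩]
    have h4 : fr a ≤ fr (b - k) := hamin' (b - k) (by omega) (by omega)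
    rw [h3] at h4
    simp only [hg1, hg2]
    linarith
  -- rewriting gap candidates
  have hval : ∀ m m' : ℕ, Int.fract ((m' : ℝ) * α - (m : ℝ) * α) = fr ((m' : ℤ) - m) := by
    intro m m'
    congr 1
    push_cast
    ring
  -- main classification
  have main : ∀ m : ℕ, m < N →
      gapAt α N m = g₁ ∨ gapAt α N m = g₂ ∨ gapAt α N m = g₁ + g₂ := by
    intro m hm
    set S : Set ℝ :=
      {d : ℝ | 0 < d ∧ ∃ m' : ℕ, m' < N ∧ Int.fract ((m' : ℝ) * α - (m : ℝ) * α) = d} with hS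
    have hgap : gapAt α N m = sInf S := rfl
    -- generic lower bounds
    have lbR : ∀ m' : ℕ, m < m' → m' < N → g₁ ≤ fr ((m' : ℤ) - m) :=
      fun m' h1 h2 => hamin' _ (by omega) (by omega)
    have lbL : ∀ m' : ℕ, m' < m → g₂ ≤ fr ((m' : ℤ) - m) := by
      intro m' h1
      rw [hleft _ (by omega), show -((m' : ℤ) - m) = (m : ℤ) - m' by ring]
      have := hbmax' ((m : ℤ) - m') (by omega) (by omega)
      simp only [hg2]
      linarith
    have lbR' : (N : ℤ) ≤ m + a → ∀ m' : ℕ, m < m' → m' < N →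
        g₁ + g₂ ≤ fr ((m' : ℤ) - m) := by
      intro hNa m' h1 h2
      exact K1 _ (by omega) (by omega)
    have lbL' : (m : ℤ) < b → ∀ m' : ℕ, m' < m → g₁ + g₂ ≤ fr ((m' : ℤ) - m) := by
      intro hmb m' h1
      rw [hleft _ (by omega), show -((m' : ℤ) - m) = (m : ℤ) - m' by ring]
      exact K2 _ (by omega) (by omega)
    -- memberships
    have memR : (m : ℤ) + a < N → g₁ ∈ S := by
      intro hA
      refine ⟨hg1pos, m + a.toNat, by omega, ?_⟩
      rw [hval]
      congr 1
      push_cast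
      omega
    have memL : b ≤ (m : ℤ) → g₂ ∈ S := by
      intro hB
      refine ⟨hg2pos, m - b.toNat, by omega, ?_⟩
      rw [hval, show ((m - b.toNat : ℕ) : ℤ) - m = -b by omega, hleft _ (by omega)]
      simp [hg2]
    have memD : (N : ℤ) ≤ m + a → (m : ℤ) < b → g₁ + g₂ ∈ S := by
      intro hA hB
      refine ⟨by linarith, m + a.toNat - b.toNat, by omega, ?_⟩
      rw [hval, show ((m + a.toNat - b.toNat : ℕ) : ℤ) - m = a - b by omega]
      rw [hsub a b, hfr_negfract _ (by have := hlt1 b; have := Int.fract_nonneg ((a:ℝ)*α); simp [hfrdef] at *; linarith) (by linarith)]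
      simp only [hg1, hg2]
      ring
    by_cases hA : (m : ℤ) + a < N <;> by_cases hB : b ≤ (m : ℤ)
    · -- both candidates: min g₁ g₂
      have hleast : IsLeast S (min g₁ g₂) := by
        constructor
        · rcases le_total g₁ g₂ with h | h
          · rw [min_eq_left h]; exact memR hA
          · rw [min_eq_right h]; exact memL hB
        · rintro d ⟨hd0, m', hm', rfl⟩
          rw [hval]
          rcases lt_trichotomy m m' with h | h | h
          · exact le_trans (min_le_left _ _) (lbR m' h hm')
          · exfalso
            rw [hval, show ((m' : ℤ) - m) = 0 by omega] at hd0
            simp [hfrdef] at hd0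
          · exact le_trans (min_le_right _ _) (lbL m' h)
      rw [hgap, hleast.csInf_eq]
      rcases le_total g₁ g₂ with h | h
      · left; exact min_eq_left h
      · right; left; exact min_eq_right h
    · left
      have hleast : IsLeast S g₁ := by
        refine ⟨memR hA, ?_⟩
        rintro d ⟨hd0, m', hm', rfl⟩
        rw [hval]
        rcases lt_trichotomy m m' with h | h | h
        · exact lbR m' h hm'
        · exfalso
          rw [hval, show ((m' : ℤ) - m) = 0 by omega] at hd0
          simp [hfrdef] at hd0
        · exact le_trans (by linarith) (lbL' (by omega) m' h)
      rw [hgap, hleast.csInf_eq]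
    · right; left
      have hleast : IsLeast S g₂ := by
        refine ⟨memL hB, ?_⟩
        rintro d ⟨hd0, m', hm', rfl⟩
        rw [hval]
        rcases lt_trichotomy m m' with h | h | h
        · exact le_trans (by linarith) (lbR' (by omega) m' h hm')
        · exfalso
          rw [hval, show ((m' : ℤ) - m) = 0 by omega] at hd0
          simp [hfrdef] at hd0
        · exact lbL m' h
      rw [hgap, hleast.csInf_eq]
    · right; right
      have hleast : IsLeast S (g₁ + g₂) := by
        refine ⟨memD (by omega) (by omega), ?_⟩
        rintro d ⟨hd0, m', hm', rfl⟩
        rw [hval]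
        rcases lt_trichotomy m m' with h | h | h
        · exact lbR' (by omega) m' h hm'
        · exfalso
          rw [hval, show ((m' : ℤ) - m) = 0 by omega] at hd0
          simp [hfrdef] at hd0
        · exact lbL' (by omega) m' h
      rw [hgap, hleast.csInf_eq]
  -- each Δᵢ is in gapSet, hence one of g₁, g₂, g₁+g₂
  have hΔmem : ∀ x ∈ ({Δ₁, Δ₂, Δ₃} : Finset ℝ), x = g₁ ∨ x = g₂ ∨ x = g₁ + g₂ := by
    intro x hx
    rw [← hset, gapSet, Finset.mem_image] at hx
    obtain ⟨m, hm, hmx⟩ := hx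
    rw [Finset.mem_range] at hm
    rw [← hmx]
    exact main m hm
  have h1 := hΔmem Δ₁ (by simp)
  have h2 := hΔmem Δ₂ (by simp)
  have h3 := hΔmem Δ₃ (by simp)
  rcases h1 with h1 | h1 | h1 <;> rcases h2 with h2 | h2 | h2 <;>
    rcases h3 with h3 | h3 | h3 <;> linarith
end

section
/- If N is a relabeling time, then u_j ≡ j·u_1 (mod N) for all j = 0, 1, ..., N-1, where (u_j) is the permutation of {0,...,N-1} with {u_0 α} < {u_1 α} < ... < {u_{N-1} α}. -/
namespace RelabelAux

variable {α : ℝ}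

lemma fract_int_inj (hα : Irrational α) {k l : ℤ}
    (h : Int.fract ((k : ℝ) * α) = Int.fract ((l : ℝ) * α)) : k = l := by
  rcases Int.fract_eq_fract.mp h with ⟨z, hz⟩
  by_contra hne
  have h1 : Irrational (((k - l : ℤ) : ℝ) * α) := hα.intCast_mul (sub_ne_zero.mpr hne)
  have h2 : ((k - l : ℤ) : ℝ) * α = (z : ℝ) := by push_cast; linarith [hz]
  exact h1.ne_int z h2

lemma fract_int_pos (hα : Irrational α) {k : ℤ} (hk : k ≠ 0) :
    0 < Int.fract ((k : ℝ) * α) := by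
  rcases (Int.fract_nonneg ((k : ℝ) * α)).lt_or_eq with h | h
  · exact h
  · exact absurd (fract_int_inj hα (l := 0) (by rw [← h]; norm_num)) hk

lemma fract_sub_of_le {x y : ℝ} (h : Int.fract y ≤ Int.fract x) :
    Int.fract (x - y) = Int.fract x - Int.fract y := by
  rw [Int.fract_eq_iff]
  refine ⟨by linarith, by linarith [Int.fract_lt_one x, Int.fract_nonneg y], ⟨⌊x⌋ - ⌊y⌋, ?_⟩⟩
  push_cast
  linarith [Int.self_sub_fract x, Int.self_sub_fract y]

lemma fract_sub_of_lt {x y : ℝ} (h : Int.fract x < Int.fract y) :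
    Int.fract (x - y) = Int.fract x - Int.fract y + 1 := by
  rw [Int.fract_eq_iff]
  refine ⟨by linarith [Int.fract_nonneg x, Int.fract_lt_one y], by linarith,
    ⟨⌊x⌋ - ⌊y⌋ - 1, ?_⟩⟩
  push_cast
  linarith [Int.self_sub_fract x, Int.self_sub_fract y]

lemma fract_add_eq (x y : ℝ) :
    Int.fract (x + y) = Int.fract (Int.fract x + Int.fract y) := by
  rw [Int.fract_eq_fract]
  exact ⟨⌊x⌋ + ⌊y⌋, by push_cast; linarith [Int.self_sub_fract x, Int.self_sub_fract y]⟩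

lemma gap_succ (hα : Irrational α) {N : ℕ} (hN : 2 ≤ N)
    {u : ℕ → ℕ} (hbij : Set.BijOn u (Set.Iio N) (Set.Iio N))
    (hmono : StrictMonoOn (fun j => Int.fract ((u j : ℝ) * α)) (Set.Iio N))
    {j : ℕ} (hj : j < N) :
    gapAt α N (u j) =
      Int.fract ((uc N u ((j : ℤ) + 1) : ℝ) * α - (u j : ℝ) * α) := by
  set F : ℕ → ℝ := fun k => Int.fract ((u k : ℝ) * α) with hF
  set m' : ℕ := uc N u ((j : ℤ) + 1) with hm'def
  have hidx : (((j : ℤ) + 1) % (N : ℤ)).toNat = if j + 1 < N then j + 1 else 0 := by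
    by_cases h : j + 1 < N
    · rw [if_pos h, Int.emod_eq_of_lt (by omega) (by exact_mod_cast h)]
      omega
    · rw [if_neg h]
      have hje : (j : ℤ) + 1 = (N : ℤ) := by omega
      rw [hje, Int.emod_self]
      rfl
  have hm'_eq : m' = if j + 1 < N then u (j + 1) else u 0 := by
    rw [hm'def]
    show u ((((j : ℤ) + 1) % (N : ℤ)).toNat) = _
    rw [hidx]; split <;> rfl
  have hujN : u j < N := hbij.mapsTo hj
  have hm'N : m' < N := by
    rw [hm'_eq]; split
    · exact hbij.mapsTo (by simpa using (by omega : j + 1 < N))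
    · exact hbij.mapsTo (by simpa using (by omega : 0 < N))
  have hm'ne : m' ≠ u j := by
    rw [hm'_eq]; split
    · intro h
      exact absurd (hbij.injOn (by simpa using (by assumption : j + 1 < N))
        (by simpa using hj) h) (by omega)
    · intro h
      have hj0 : j ≠ 0 := by omega
      exact hj0 (hbij.injOn (by simpa using hj) (by simpa using (by omega : 0 < N)) h.symm)
  have key_pos : ∀ k : ℕ, k < N → k ≠ u j →
      0 < Int.fract ((k : ℝ) * α - (u j : ℝ) * α) := by
    intro k hk hkne
    have hrw : (k : ℝ) * α - (u j : ℝ) * α = (((k : ℤ) - (u j : ℤ) : ℤ) : ℝ) * α := by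
      push_cast; ring
    rw [hrw]
    exact fract_int_pos hα (by
      intro h
      exact hkne (by omega))
  have hd₀pos : 0 < Int.fract ((m' : ℝ) * α - (u j : ℝ) * α) := key_pos m' hm'N hm'ne
  -- main inequality: d₀ ≤ any other positive distance
  have hmin : ∀ k : ℕ, k < N → k ≠ j →
      Int.fract ((m' : ℝ) * α - (u j : ℝ) * α) ≤
      Int.fract ((u k : ℝ) * α - (u j : ℝ) * α) := by
    intro k hk hkj
    have hFk : Int.fract ((u k : ℝ) * α) = F k := rfl
    have hFj : Int.fract ((u j : ℝ) * α) = F j := rfl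
    have hmem : ∀ i : ℕ, i < N → i ∈ Set.Iio N := fun i hi => by simpa using hi
    by_cases hcase : j + 1 < N
    · rw [hm'_eq, if_pos hcase]
      have h1 : F j < F (j + 1) := hmono (hmem j hj) (hmem _ hcase) (by omega)
      have hd₀ : Int.fract ((u (j+1) : ℝ) * α - (u j : ℝ) * α) = F (j+1) - F j :=
        fract_sub_of_le h1.le
      rcases lt_or_gt_of_ne hkj with hlt | hgt
      · -- k < j
        have h2 : F k < F j := hmono (hmem k hk) (hmem j hj) hlt
        have hd : Int.fract ((u k : ℝ) * α - (u j : ℝ) * α) = F k - F j + 1 :=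
          fract_sub_of_lt h2
        rw [hd₀, hd]
        have := Int.fract_lt_one ((u (j+1) : ℝ) * α)
        have := Int.fract_nonneg ((u k : ℝ) * α)
        have hFk1 : F (j+1) < 1 := by simpa using (Int.fract_lt_one ((u (j+1) : ℝ) * α))
        have hFknn : 0 ≤ F k := Int.fract_nonneg _
        linarith
      · -- k > j
        have h2 : F j < F k := hmono (hmem j hj) (hmem k hk) hgt
        have hd : Int.fract ((u k : ℝ) * α - (u j : ℝ) * α) = F k - F j :=
          fract_sub_of_le h2.le
        have h3 : F (j+1) ≤ F k := by
          rcases eq_or_lt_of_le (by omega : j + 1 ≤ k) with rfl | hlt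
          · exact le_refl _
          · exact (hmono (hmem _ hcase) (hmem k hk) hlt).le
        rw [hd₀, hd]; linarith
    · -- j = N - 1, successor is u 0
      rw [hm'_eq, if_neg hcase]
      have hj0 : 0 < j := by omega
      have h1 : F 0 < F j := hmono (hmem 0 (by omega)) (hmem j hj) hj0
      have hd₀ : Int.fract ((u 0 : ℝ) * α - (u j : ℝ) * α) = F 0 - F j + 1 :=
        fract_sub_of_lt h1
      have hklt : k < j := by omega
      have h2 : F k < F j := hmono (hmem k hk) (hmem j hj) hklt
      have hd : Int.fract ((u k : ℝ) * α - (u j : ℝ) * α) = F k - F j + 1 :=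
        fract_sub_of_lt h2
      have h3 : F 0 ≤ F k := by
        rcases Nat.eq_zero_or_pos k with rfl | hkpos
        · exact le_refl _
        · exact (hmono (hmem 0 (by omega)) (hmem k hk) hkpos).le
      rw [hd₀, hd]; linarith
  apply le_antisymm
  · exact csInf_le ⟨0, fun d hd => hd.1.le⟩ ⟨hd₀pos, m', hm'N, rfl⟩
  · apply le_csInf
    · exact ⟨Int.fract ((m' : ℝ) * α - (u j : ℝ) * α), hd₀pos, m', hm'N, rfl⟩
    rintro d ⟨hdpos, m'', hm''N, rfl⟩
    rcases hbij.surjOn (by simpa using hm''N : m'' ∈ Set.Iio N) with ⟨k, hk, rfl⟩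
    have hkN : k < N := by simpa using hk
    have hkj : k ≠ j := by
      rintro rfl
      simp [sub_self] at hdpos
    exact hmin k hkN hkj

end RelabelAux

open RelabelAux in
theorem relabeling_mod_formula (α : ℝ) (hα : Irrational α) (N : ℕ) (hN : 2 ≤ N)
    (u : ℕ → ℕ) (hbij : Set.BijOn u (Set.Iio N) (Set.Iio N))
    (hmono : StrictMonoOn (fun j => Int.fract ((u j : ℝ) * α)) (Set.Iio N))
    (hrel : (gapSet α N).card = 2) :
    ∀ j < N, u j ≡ j * u 1 [MOD N] := by
  classical
  have hmem : ∀ i : ℕ, i < N → i ∈ Set.Iio N := fun i hi => by simpa using hi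
  have huN : ∀ i : ℕ, i < N → u i < N := fun i hi => hbij.mapsTo (hmem i hi)
  -- u 0 = 0
  have hu0 : u 0 = 0 := by
    obtain ⟨k, hk, huk⟩ := hbij.surjOn (hmem 0 (by omega))
    have hkN : k < N := by simpa using hk
    have hFk : Int.fract ((u k : ℝ) * α) = 0 := by rw [huk]; simp
    have hF0 : Int.fract ((u 0 : ℝ) * α) ≤ 0 := by
      rcases Nat.eq_zero_or_pos k with rfl | hkpos
      · rw [hFk]
      · have := hmono (hmem 0 (by omega)) (hmem k hkN) hkpos
        simp only at this
        linarith [hFk ▸ this]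
    have h0 : Int.fract (((u 0 : ℤ) : ℝ) * α) = Int.fract (((0 : ℤ) : ℝ) * α) := by
      push_cast
      simp only [zero_mul, Int.fract_zero]
      linarith [Int.fract_nonneg ((u 0 : ℝ) * α)]
    exact_mod_cast fract_int_inj hα h0
  set a : ℕ := u 1 with ha_def
  set b : ℕ := u (N - 1) with hb_def
  have haN : a < N := huN 1 (by omega)
  have hbN : b < N := huN (N - 1) (by omega)
  have ha0 : 0 < a := by
    rcases Nat.eq_zero_or_pos a with h0 | h
    · exfalso
      have : (1 : ℕ) = 0 := hbij.injOn (hmem 1 (by omega)) (hmem 0 (by omega))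
        (by rw [← ha_def, h0, hu0])
      omega
    · exact h
  have hb0 : 0 < b := by
    rcases Nat.eq_zero_or_pos b with h0 | h
    · exfalso
      have : N - 1 = 0 := hbij.injOn (hmem (N - 1) (by omega)) (hmem 0 (by omega))
        (by rw [← hb_def, h0, hu0])
      omega
    · exact h
  set δ : ℝ := Int.fract ((a : ℝ) * α) with hδ_def
  set ε : ℝ := Int.fract (-((b : ℝ) * α)) with hε_def
  -- δ is the gap at 0
  have huc1 : uc N u (((0 : ℕ) : ℤ) + 1) = u 1 := by
    show u (((((0 : ℕ) : ℤ) + 1) % (N : ℤ)).toNat) = u 1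
    congr 1
    have h0 : (((0 : ℕ) : ℤ) + 1) = 1 := by norm_num
    rw [h0, Int.emod_eq_of_lt (by omega) (by omega)]
    rfl
  have hδval : gapAt α N 0 = δ := by
    have h := gap_succ hα hN hbij hmono (j := 0) (by omega)
    rw [hu0, huc1] at h
    rw [hδ_def]
    simpa using h
  -- ε is the gap at b
  have hucN : uc N u (((N - 1 : ℕ) : ℤ) + 1) = u 0 := by
    show u ((((N - 1 : ℕ) : ℤ) + 1) % (N : ℤ)).toNat = u 0
    congr 1
    have h1 : ((N - 1 : ℕ) : ℤ) + 1 = (N : ℤ) := by omega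
    rw [h1, Int.emod_self]
    rfl
  have hεval : gapAt α N b = ε := by
    have h := gap_succ hα hN hbij hmono (j := N - 1) (by omega)
    rw [hucN, hu0, ← hb_def] at h
    rw [hε_def]
    simpa using h
  -- the two gaps are distinct
  have hδε : δ ≠ ε := by
    intro h
    have h' : Int.fract (((a : ℤ) : ℝ) * α) = Int.fract (((-(b : ℤ) : ℤ) : ℝ) * α) := by
      push_cast
      rw [neg_mul]
      exact h
    have := fract_int_inj hα h'
    omega
  -- every gap is δ or ε
  have hgaps : ∀ m : ℕ, m < N → gapAt α N m = δ ∨ gapAt α N m = ε := by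
    have hsub : ({δ, ε} : Finset ℝ) ⊆ gapSet α N := by
      intro d hd
      rcases Finset.mem_insert.mp hd with rfl | hd
      · unfold gapSet
        exact Finset.mem_image.mpr ⟨0, Finset.mem_range.mpr (by omega), hδval⟩
      · rw [Finset.mem_singleton] at hd
        subst hd
        unfold gapSet
        exact Finset.mem_image.mpr ⟨b, Finset.mem_range.mpr hbN, hεval⟩
    have hcard : ({δ, ε} : Finset ℝ).card = 2 := by
      rw [Finset.card_insert_of_notMem (by simpa using hδε), Finset.card_singleton]
    have hset : ({δ, ε} : Finset ℝ) = gapSet α N :=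
      Finset.eq_of_subset_of_card_le hsub (by rw [hrel, hcard])
    intro m hm
    have : gapAt α N m ∈ gapSet α N := by
      unfold gapSet
      exact Finset.mem_image.mpr ⟨m, Finset.mem_range.mpr hm, rfl⟩
    rw [← hset] at this
    rcases Finset.mem_insert.mp this with h | h
    · exact Or.inl h
    · exact Or.inr (Finset.mem_singleton.mp h)
  -- the dichotomy for successors
  have step : ∀ j : ℕ, j < N →
      ((uc N u ((j : ℤ) + 1) : ℤ) = (u j : ℤ) + a ∨
       (uc N u ((j : ℤ) + 1) : ℤ) = (u j : ℤ) - b) := by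
    intro j hj
    have hg := gap_succ hα hN hbij hmono hj
    rcases hgaps (u j) (huN j hj) with h | h
    · left
      rw [hg] at h
      have h' : Int.fract ((((uc N u ((j : ℤ) + 1) : ℤ) - (u j : ℤ) : ℤ) : ℝ) * α)
          = Int.fract (((a : ℤ) : ℝ) * α) := by
        push_cast
        rw [sub_mul]
        exact h
      have := fract_int_inj hα h'
      omega
    · right
      rw [hg] at h
      have h' : Int.fract ((((uc N u ((j : ℤ) + 1) : ℤ) - (u j : ℤ) : ℤ) : ℝ) * α)
          = Int.fract (((-(b : ℤ) : ℤ) : ℝ) * α) := by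
        push_cast
        rw [sub_mul, neg_mul]
        exact h
      have := fract_int_inj hα h'
      omega
  -- a + b ≤ N
  have hab_le : a + b ≤ N := by
    obtain ⟨j, hj, huj⟩ := hbij.surjOn (hmem (N - a) (by omega))
    have hjN : j < N := by simpa using hj
    have hucN' : uc N u ((j : ℤ) + 1) < N := huN _ (by
      show (((j : ℤ) + 1) % (N : ℤ)).toNat < N
      have h1 := Int.emod_nonneg ((j : ℤ) + 1) (by omega : (N : ℤ) ≠ 0)
      have h2 := Int.emod_lt_of_pos ((j : ℤ) + 1) (by omega : (0 : ℤ) < (N : ℤ))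
      omega)
    rcases step j hjN with h | h
    · rw [huj] at h
      omega
    · rw [huj] at h
      omega
  -- a + b ≥ N
  have hab_ge : N ≤ a + b := by
    by_contra hcon
    push_neg at hcon
    have habN : a + b < N := hcon
    -- min and max properties
    have hmin : ∀ m : ℕ, 0 < m → m < N → δ ≤ Int.fract ((m : ℝ) * α) := by
      intro m hm0 hmN
      obtain ⟨k, hk, huk⟩ := hbij.surjOn (hmem m hmN)
      have hkN : k < N := by simpa using hk
      have hk0 : k ≠ 0 := by
        rintro rfl
        rw [hu0] at huk
        omega
      rw [← huk]
      rcases Nat.eq_or_lt_of_le (by omega : 1 ≤ k) with h1 | h1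
      · rw [← h1]
      · exact (hmono (hmem 1 (by omega)) (hmem k hkN) h1).le
    have hmax : ∀ m : ℕ, m < N → Int.fract ((m : ℝ) * α) ≤ Int.fract ((b : ℝ) * α) := by
      intro m hmN
      obtain ⟨k, hk, huk⟩ := hbij.surjOn (hmem m hmN)
      have hkN : k < N := by simpa using hk
      rw [← huk]
      rcases Nat.eq_or_lt_of_le (by omega : k ≤ N - 1) with h1 | h1
      · rw [h1]
      · exact (hmono (hmem k hkN) (hmem (N - 1) (by omega)) h1).le
    set fa : ℝ := Int.fract ((a : ℝ) * α) with hfa_def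
    set fb : ℝ := Int.fract ((b : ℝ) * α) with hfb_def
    have hfa_pos : 0 < fa := by
      have := fract_int_pos hα (k := (a : ℤ)) (by omega)
      rw [hfa_def]
      push_cast at this ⊢
      exact this
    have hfb_pos : 0 < fb := by
      have := fract_int_pos hα (k := (b : ℤ)) (by omega)
      rw [hfb_def]
      push_cast at this ⊢
      exact this
    have hfa_lt : fa < 1 := Int.fract_lt_one _
    have hfb_lt : fb < 1 := Int.fract_lt_one _
    have hsum : Int.fract (((a + b : ℕ) : ℝ) * α) = Int.fract (fa + fb) := by
      push_cast
      rw [add_mul]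
      exact fract_add_eq _ _
    have h1 : δ ≤ Int.fract (((a + b : ℕ) : ℝ) * α) := hmin (a + b) (by omega) habN
    have h2 : Int.fract (((a + b : ℕ) : ℝ) * α) ≤ fb := hmax (a + b) habN
    rcases lt_or_ge (fa + fb) 1 with hc | hc
    · have : Int.fract (fa + fb) = fa + fb := Int.fract_eq_self.mpr ⟨by linarith, hc⟩
      rw [hsum, this] at h2
      linarith
    · have : Int.fract (fa + fb) = fa + fb - 1 := by
        rw [Int.fract_eq_iff]
        exact ⟨by linarith, by linarith, ⟨1, by ring⟩⟩
      rw [hsum, this] at h1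
      have : δ = fa := rfl
      linarith [this ▸ h1]
  have hab : a + b = N := le_antisymm hab_le hab_ge
  -- congruence step
  have cong : ∀ j : ℕ, j < N → (uc N u ((j : ℤ) + 1) : ℤ) ≡ (u j : ℤ) + a [ZMOD (N : ℤ)] := by
    intro j hj
    rcases step j hj with h | h
    · rw [h]
    · rw [h]
      have he : (u j : ℤ) - b = (u j : ℤ) + a - N := by omega
      rw [he]
      exact Int.ModEq.symm (Int.modEq_iff_dvd.mpr ⟨-1, by ring⟩)
  -- induction
  have key : ∀ j : ℕ, j < N → (u j : ℤ) ≡ (j : ℤ) * a [ZMOD (N : ℤ)] := by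
    intro j
    induction j with
    | zero => intro _; simp [hu0]
    | succ j ih =>
      intro hj1
      have hj : j < N := by omega
      have hucc : uc N u ((j : ℤ) + 1) = u (j + 1) := by
        show u ((((j : ℤ) + 1) % (N : ℤ)).toNat) = u (j + 1)
        congr 1
        rw [Int.emod_eq_of_lt (by omega) (by exact_mod_cast hj1)]
        omega
      have h1 : (u (j + 1) : ℤ) ≡ (u j : ℤ) + a [ZMOD (N : ℤ)] := hucc ▸ cong j hj
      have h2 : (u j : ℤ) + a ≡ (j : ℤ) * a + a [ZMOD (N : ℤ)] := (ih hj).add_right _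
      have h3 : ((j : ℤ) + 1) * a = (j : ℤ) * a + a := by ring
      calc (u (j + 1) : ℤ) ≡ (u j : ℤ) + a [ZMOD (N : ℤ)] := h1
        _ ≡ (j : ℤ) * a + a [ZMOD (N : ℤ)] := h2
        _ = ((j : ℤ) + 1) * a := h3.symm
        _ = ((j + 1 : ℕ) : ℤ) * a := by push_cast; ring
  intro j hj
  have h := key j hj
  rw [← Int.natCast_modEq_iff]
  have hcast : ((j * u 1 : ℕ) : ℤ) = (j : ℤ) * a := by push_cast; rw [ha_def]
  rw [hcast]
  exact h
end

section
/- If N is a relabeling time, then gcd(u_1, N) = 1, where u_1 is the index with {u_1 α} minimal positive among {mα}, 0 ≤ m < N. -/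
lemma fract_int_mul_ne (α : ℝ) (hα : Irrational α) {k : ℤ} (hk : k ≠ 0) :
    Int.fract ((k : ℝ) * α) ≠ 0 := by
  intro h
  have h0 : Int.fract ((k : ℝ) * α) = Int.fract ((0:ℤ) : ℝ) := by simpa using h
  obtain ⟨z, hz⟩ := Int.fract_eq_fract.1 h0
  exact (hα.intCast_mul hk).ne_int z (by push_cast at hz ⊢; linarith)

lemma fract_int_mul_inj (α : ℝ) (hα : Irrational α) {k k' : ℤ}
    (h : Int.fract ((k : ℝ) * α) = Int.fract ((k' : ℝ) * α)) : k = k' := by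
  by_contra hne
  have hkk : (k - k' : ℤ) ≠ 0 := sub_ne_zero.2 hne
  obtain ⟨z, hz⟩ := Int.fract_eq_fract.1 h
  exact (hα.intCast_mul hkk).ne_int z (by push_cast at hz ⊢; linarith)

lemma fract_sub_fract (x y : ℝ) :
    Int.fract (x - y) = Int.fract (Int.fract x - Int.fract y) := by
  rw [Int.fract_eq_fract]
  exact ⟨⌊x⌋ - ⌊y⌋, by unfold Int.fract; push_cast; ring⟩

lemma fract_sub_of_le {x y : ℝ} (h : Int.fract y ≤ Int.fract x) :
    Int.fract (x - y) = Int.fract x - Int.fract y := by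
  rw [fract_sub_fract]
  exact Int.fract_eq_self.2 ⟨by linarith, by linarith [Int.fract_lt_one x, Int.fract_nonneg y]⟩

lemma fract_sub_of_lt {x y : ℝ} (h : Int.fract x < Int.fract y) :
    Int.fract (x - y) = Int.fract x - Int.fract y + 1 := by
  rw [fract_sub_fract]
  have h1 : Int.fract (Int.fract x - Int.fract y) = Int.fract (Int.fract x - Int.fract y + 1) := by
    rw [Int.fract_eq_fract]; exact ⟨-1, by push_cast; ring⟩
  rw [h1]
  exact Int.fract_eq_self.2 ⟨by linarith [Int.fract_nonneg x, Int.fract_lt_one y], by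
    linarith [Int.fract_lt_one x, Int.fract_nonneg y]⟩

section main
variable (α : ℝ) (N : ℕ) (hN : 2 ≤ N)
    (u : ℕ → ℕ) (hbij : Set.BijOn u (Set.Iio N) (Set.Iio N))
    (hmono : StrictMonoOn (fun j => Int.fract ((u j : ℝ) * α)) (Set.Iio N))

include hbij hmono hN

lemma u_zero : u 0 = 0 := by
  obtain ⟨j, hj, hj0⟩ : ∃ j ∈ Set.Iio N, u j = 0 := hbij.surjOn (by simp [Set.mem_Iio]; omega)
  by_contra h
  have hjne : j ≠ 0 := by rintro rfl; exact h hj0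
  have := hmono (show (0:ℕ) ∈ Set.Iio N by simp; omega) hj (Nat.pos_of_ne_zero hjne)
  simp only [hj0] at this
  simp at this
  exact absurd this (not_lt.2 (Int.fract_nonneg _))

lemma gapAt_u (j : ℕ) (hj : j < N) :
    gapAt α N (u j) = Int.fract ((u ((j+1) % N) : ℝ) * α - (u j : ℝ) * α) := by
  classical
  set x : ℕ → ℝ := fun j => Int.fract ((u j : ℝ) * α) with hxdef
  have hx0 : x 0 = 0 := by
    simp [hxdef, u_zero α N hN u hbij hmono]
  have hxlt : ∀ {a b : ℕ}, a < N → b < N → a < b → x a < x b := fun ha hb hab =>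
    hmono (Set.mem_Iio.2 ha) (Set.mem_Iio.2 hb) hab
  have hxnn : ∀ a, 0 ≤ x a := fun a => Int.fract_nonneg _
  have hxlt1 : ∀ a, x a < 1 := fun a => Int.fract_lt_one _
  have hd : ∀ a b : ℕ, a < N → b < N →
      Int.fract ((u a : ℝ) * α - (u b : ℝ) * α)
        = if b ≤ a then x a - x b else x a - x b + 1 := by
    intro a b ha hb
    by_cases hba : b ≤ a
    · rw [if_pos hba]
      rcases eq_or_lt_of_le hba with rfl | hba'
      · simp
      · exact fract_sub_of_le (le_of_lt (hxlt hb ha hba'))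
    · rw [if_neg hba]
      exact fract_sub_of_lt (hxlt ha hb (by omega))
  set j2 := (j+1) % N with hj2def
  have hj2 : j2 < N := Nat.mod_lt _ (by omega)
  set v := Int.fract ((u j2 : ℝ) * α - (u j : ℝ) * α) with hvdef
  have hvcases : (j + 1 < N ∧ j2 = j + 1 ∧ v = x (j+1) - x j) ∨
      (j = N - 1 ∧ j2 = 0 ∧ v = 1 - x j) := by
    by_cases h : j + 1 < N
    · left
      have : j2 = j + 1 := Nat.mod_eq_of_lt h
      refine ⟨h, this, ?_⟩
      rw [hvdef, this, hd _ _ h hj, if_pos (by omega)]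
    · right
      have hje : j = N - 1 := by omega
      have h2 : j2 = 0 := by rw [hj2def, hje]; simp [Nat.sub_add_cancel (by omega : 1 ≤ N)]
      refine ⟨hje, h2, ?_⟩
      rw [hvdef, h2, hd _ _ (by omega) hj, if_neg (by omega), hx0]; ring
  have hvpos : 0 < v := by
    rcases hvcases with ⟨h1, _, h3⟩ | ⟨h1, _, h3⟩
    · rw [h3]; have := hxlt hj h1 (by omega); linarith
    · rw [h3]; linarith [hxlt1 j]
  apply IsLeast.csInf_eq
  constructor
  · exact ⟨hvpos, u j2, hbij.mapsTo (Set.mem_Iio.2 hj2), rfl⟩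
  · rintro d ⟨hd0, m', hm', rfl⟩
    obtain ⟨j', hj', rfl⟩ : ∃ j' ∈ Set.Iio N, u j' = m' := hbij.surjOn (Set.mem_Iio.2 hm')
    have hj'N : j' < N := Set.mem_Iio.1 hj'
    rw [hd _ _ hj'N hj]
    have hjj' : j ≠ j' := by
      rintro rfl
      rw [hd _ _ hj'N hj'N, if_pos le_rfl] at hd0
      simp at hd0
    rcases hvcases with ⟨h1, _, h3⟩ | ⟨h1, _, h3⟩
    · rw [h3]
      by_cases hle : j ≤ j'
      · rw [if_pos hle]
        have hj1j' : j + 1 ≤ j' := by omega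
        rcases eq_or_lt_of_le hj1j' with rfl | hlt
        · linarith
        · have := hxlt h1 hj'N hlt; linarith
      · rw [if_neg hle]
        have := hxnn j'
        have := hxlt1 (j+1)
        linarith
    · rw [h3]
      have hle : j' < j := by omega
      rw [if_neg (by omega)]
      have := hxnn j'
      have := hxlt hj'N hj hle
      linarith
end main

set_option linter.unusedTactic false in
theorem relabeling_coprime (α : ℝ) (hα : Irrational α) (N : ℕ) (hN : 2 ≤ N)
    (u : ℕ → ℕ) (hbij : Set.BijOn u (Set.Iio N) (Set.Iio N))
    (hmono : StrictMonoOn (fun j => Int.fract ((u j : ℝ) * α)) (Set.Iio N))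
    (hrel : (gapSet α N).card = 2) :
    Nat.Coprime (u 1) N := by
  classical
  have hu0 : u 0 = 0 := u_zero α N hN u hbij hmono
  have hmaps : ∀ j, j < N → u j < N := fun j hj => hbij.mapsTo (Set.mem_Iio.2 hj)
  have hsurj : ∀ m, m < N → ∃ j, j < N ∧ u j = m := by
    intro m hm
    obtain ⟨j, hj, hjm⟩ := hbij.surjOn (Set.mem_Iio.2 hm)
    exact ⟨j, Set.mem_Iio.1 hj, hjm⟩
  have hinj : ∀ a b, a < N → b < N → u a = u b → a = b := fun a b ha hb h =>
    hbij.injOn (Set.mem_Iio.2 ha) (Set.mem_Iio.2 hb) h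
  set P : ℤ := (u 1 : ℤ) with hPdef
  set Q : ℤ := (u (N-1) : ℤ) with hQdef
  have hp0 : 0 < u 1 := by
    rcases Nat.eq_zero_or_pos (u 1) with h | h
    · exact absurd (hinj 1 0 (by omega) (by omega) (by omega)) (by omega)
    · exact h
  have hq0 : 0 < u (N-1) := by
    rcases Nat.eq_zero_or_pos (u (N-1)) with h | h
    · exact absurd (hinj (N-1) 0 (by omega) (by omega) (by omega)) (by omega)
    · exact h
  set k : ℕ → ℤ := fun j => (u ((j+1) % N) : ℤ) - (u j : ℤ) with hkdef
  have hgapk : ∀ j, j < N → gapAt α N (u j) = Int.fract ((k j : ℝ) * α) := by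
    intro j hj
    rw [gapAt_u α N hN u hbij hmono j hj]
    congr 1
    simp only [hkdef]
    push_cast
    ring
  have hk0 : k 0 = P := by
    simp only [hkdef, hPdef, Nat.zero_add, Nat.mod_eq_of_lt (by omega : 1 < N), hu0]
    simp
  have hkN : k (N-1) = -Q := by
    have h1 : (N - 1 + 1) % N = 0 := by
      have : N - 1 + 1 = N := by omega
      rw [this, Nat.mod_self]
    simp only [hkdef, hQdef, h1, hu0]
    simp
  set δ : ℝ := Int.fract ((P : ℝ) * α) with hδdef
  set δ' : ℝ := Int.fract ((-Q : ℝ) * α) with hδ'def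
  have hδmem : δ ∈ gapSet α N := by
    rw [gapSet]
    refine Finset.mem_image.2 ⟨u 0, Finset.mem_range.2 (hmaps 0 (by omega)), ?_⟩
    rw [hgapk 0 (by omega), hk0]
  have hδ'mem : δ' ∈ gapSet α N := by
    rw [gapSet]
    refine Finset.mem_image.2 ⟨u (N-1), Finset.mem_range.2 (hmaps (N-1) (by omega)), ?_⟩
    rw [hgapk (N-1) (by omega), hkN, hδ'def]
    congr 1
    push_cast
    ring
  have hPne : P ≠ 0 := by simp [hPdef]; omega
  have hQne : Q ≠ 0 := by simp [hQdef]; omega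
  have hδδ' : δ ≠ δ' := by
    intro h
    have : Int.fract ((P : ℝ) * α) = Int.fract (((-Q : ℤ) : ℝ) * α) := by
      rw [← hδdef]; rw [h, hδ'def]; norm_num
    have := fract_int_mul_inj α hα this
    omega
  have hgs : gapSet α N = {δ, δ'} := by
    refine (Finset.eq_of_subset_of_card_le ?_ ?_).symm
    · intro z hz
      rcases Finset.mem_insert.1 hz with rfl | hz2
      · exact hδmem
      · rw [Finset.mem_singleton.1 hz2]; exact hδ'mem
    · rw [hrel, Finset.card_insert_of_notMem (by simp [hδδ']), Finset.card_singleton]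
  have hk_mem : ∀ j, j < N → k j = P ∨ k j = -Q := by
    intro j hj
    have hmem : gapAt α N (u j) ∈ gapSet α N := by
      rw [gapSet]
      exact Finset.mem_image.2 ⟨u j, Finset.mem_range.2 (hmaps j hj), rfl⟩
    rw [hgs, Finset.mem_insert, Finset.mem_singleton, hgapk j hj] at hmem
    rcases hmem with h | h
    · left
      exact fract_int_mul_inj α hα (by rw [h])
    · right
      refine fract_int_mul_inj α hα ?_
      rw [h, hδ'def]
      norm_num
  have hk_add : ∀ j, (u ((j+1) % N) : ℤ) = (u j : ℤ) + k j := by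
    intro j; simp [hkdef]
  have hgapub : ∀ m : ℕ, ∀ d : ℝ, 0 < d →
      (∃ m' : ℕ, m' < N ∧ Int.fract ((m' : ℝ) * α - (m : ℝ) * α) = d) →
      gapAt α N m ≤ d := by
    intro m d h0 hex
    exact csInf_le ⟨0, fun e he => le_of_lt he.1⟩ ⟨h0, hex⟩
  have hδpos : 0 < δ := by
    rcases lt_or_eq_of_le (Int.fract_nonneg ((P:ℝ)*α)) with h | h
    · exact h
    · exact absurd h.symm (fract_int_mul_ne α hα hPne)
  have hδ'pos : 0 < δ' := by
    have hne : δ' ≠ 0 := by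
      rw [hδ'def]
      have he2 : (-(Q:ℝ)) * α = ((-Q : ℤ) : ℝ) * α := by push_cast; ring
      rw [he2]
      exact fract_int_mul_ne α hα (by omega)
    rw [hδ'def]
    exact lt_of_le_of_ne (Int.fract_nonneg _) (fun h => hne (by rw [hδ'def, ← h]))
  -- sum of steps is zero
  have hsum : ∑ j ∈ Finset.range N, k j = 0 := by
    have h1 : ∑ j ∈ Finset.range N, ((u ((j+1) % N) : ℤ)) = ∑ j ∈ Finset.range N, (u j : ℤ) := by
      obtain ⟨M, rfl⟩ : ∃ M, N = M + 1 := ⟨N - 1, by omega⟩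
      rw [Finset.sum_range_succ]
      have hlast : (M + 1) % (M + 1) = 0 := Nat.mod_self _
      have hsmall : ∀ j ∈ Finset.range M, ((u ((j+1) % (M+1)) : ℤ)) = (u (j+1) : ℤ) := by
        intro j hj
        rw [Nat.mod_eq_of_lt (by have := Finset.mem_range.1 hj; omega)]
      rw [Finset.sum_congr rfl hsmall, hlast]
      conv_rhs => rw [Finset.sum_range_succ']
    calc ∑ j ∈ Finset.range N, k j
        = ∑ j ∈ Finset.range N, ((u ((j+1) % N) : ℤ) - (u j : ℤ)) := rfl
      _ = ∑ j ∈ Finset.range N, ((u ((j+1) % N) : ℤ)) - ∑ j ∈ Finset.range N, (u j : ℤ) :=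
          Finset.sum_sub_distrib _ _
      _ = 0 := by rw [h1, sub_self]
  -- the main dichotomy, yielding P + Q = N in both cases
  have hPQ : P + Q = (N : ℤ) := by
    rcases lt_or_gt_of_ne hδδ' with hlt | hlt
    · -- δ < δ' : small gap is the forward step
      have hiff : ∀ j, j < N → (k j = P ↔ (u j : ℤ) + P < N) := by
        intro j hj
        constructor
        · intro hkj
          have h1 : (u ((j+1) % N) : ℤ) < N := by
            exact_mod_cast Nat.cast_lt.2 (hmaps _ (Nat.mod_lt _ (by omega)))
          rw [hk_add j, hkj] at h1
          exact h1
        · intro hlt2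
          have hm' : u j + u 1 < N := by simp only [hPdef] at hlt2; omega
          have hub : gapAt α N (u j) ≤ δ := by
            refine hgapub _ _ hδpos ⟨u j + u 1, hm', ?_⟩
            have he : ((u j + u 1 : ℕ) : ℝ) * α - (u j : ℝ) * α = (P : ℝ) * α := by
              simp only [hPdef]; push_cast; ring
            rw [he]
          rcases hk_mem j hj with h | h
          · exact h
          · exfalso
            rw [hgapk j hj, h] at hub
            have : Int.fract ((↑(-Q) : ℝ) * α) = δ' := by rw [hδ'def]; norm_num
            rw [this] at hub
            linarith
      -- count of forward steps
      have hcount : ((Finset.range N).filter (fun j => (u j : ℤ) + P < N)).card = N - u 1 := by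
        have hbijcard : ((Finset.range N).filter (fun j => (u j : ℤ) + P < N)).card
            = ((Finset.range N).filter (fun (m : ℕ) => (m : ℤ) + P < N)).card := by
          apply Finset.card_bij (fun j _ => u j)
          · intro a ha
            simp only [Finset.mem_filter, Finset.mem_range] at ha ⊢
            exact ⟨hmaps a ha.1, ha.2⟩
          · intro a ha b hb hab
            simp only [Finset.mem_filter, Finset.mem_range] at ha hb
            exact hinj a b ha.1 hb.1 hab
          · intro m hm
            simp only [Finset.mem_filter, Finset.mem_range] at hm
            obtain ⟨j, hj, rfl⟩ := hsurj m hm.1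
            exact ⟨j, by simp only [Finset.mem_filter, Finset.mem_range]; exact ⟨hj, hm.2⟩, rfl⟩
        rw [hbijcard]
        have : (Finset.range N).filter (fun (m : ℕ) => (m : ℤ) + P < N) = Finset.range (N - u 1) := by
          ext m
          simp only [Finset.mem_filter, Finset.mem_range, hPdef]
          constructor
          · rintro ⟨h1, h2⟩; omega
          · intro h1; omega
        rw [this, Finset.card_range]
      have hsplit : (0 : ℤ) = ((N - u 1 : ℕ) : ℤ) * P + ((u 1 : ℕ) : ℤ) * (-Q) := by
        rw [← hsum, ← Finset.sum_filter_add_sum_filter_not (Finset.range N)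
          (fun j => (u j : ℤ) + P < N)]
        congr 1
        · rw [Finset.sum_congr rfl (fun j hj => by
            simp only [Finset.mem_filter, Finset.mem_range] at hj
            exact (hiff j hj.1).2 hj.2), Finset.sum_const, hcount, nsmul_eq_mul]
        · have hcard2 : ((Finset.range N).filter (fun j => ¬((u j : ℤ) + P < N))).card = u 1 := by
            have := Finset.card_filter_add_card_filter_not (s := Finset.range N)
              (p := fun j => (u j : ℤ) + P < N)
            rw [hcount, Finset.card_range] at this
            have hle : u 1 ≤ N := le_of_lt (hmaps 1 (by omega))
            omega
          rw [Finset.sum_congr rfl (fun j hj => by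
            simp only [Finset.mem_filter, Finset.mem_range] at hj
            rcases hk_mem j hj.1 with h | h
            · exact absurd ((hiff j hj.1).1 h) hj.2
            · exact h), Finset.sum_const, hcard2, nsmul_eq_mul]
      have hle : u 1 ≤ N := le_of_lt (hmaps 1 (by omega))
      have : ((N : ℤ) - P) * P = P * Q := by
        push_cast [Nat.cast_sub hle] at hsplit
        simp only [← hPdef] at hsplit
        linarith
      have := mul_right_cancel₀ hPne (by linarith [this] : ((N : ℤ) - P) * P = Q * P)
      omega
    · -- δ' < δ : small gap is the backward step
      have hiff : ∀ j, j < N → (k j = -Q ↔ Q ≤ (u j : ℤ)) := by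
        intro j hj
        constructor
        · intro hkj
          have h1 : (0 : ℤ) ≤ (u ((j+1) % N) : ℤ) := by positivity
          rw [hk_add j, hkj] at h1
          omega
        · intro hge
          have hle' : u (N-1) ≤ u j := by simp only [hQdef] at hge; omega
          have hub : gapAt α N (u j) ≤ δ' := by
            refine hgapub _ _ hδ'pos ⟨u j - u (N-1), by have := hmaps j hj; omega, ?_⟩
            have he : ((u j - u (N-1) : ℕ) : ℝ) * α - (u j : ℝ) * α = (-Q : ℝ) * α := by
              rw [Nat.cast_sub hle']
              simp only [hQdef]
              push_cast
              ring
            rw [he, ← hδ'def]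
          rcases hk_mem j hj with h | h
          · exfalso
            rw [hgapk j hj, h, ← hδdef] at hub
            linarith
          · exact h
      have hcount : ((Finset.range N).filter (fun j => Q ≤ (u j : ℤ))).card = N - u (N-1) := by
        have hbijcard : ((Finset.range N).filter (fun j => Q ≤ (u j : ℤ))).card
            = ((Finset.range N).filter (fun (m : ℕ) => Q ≤ (m : ℤ))).card := by
          apply Finset.card_bij (fun j _ => u j)
          · intro a ha
            simp only [Finset.mem_filter, Finset.mem_range] at ha ⊢
            exact ⟨hmaps a ha.1, ha.2⟩
          · intro a ha b hb hab
            simp only [Finset.mem_filter, Finset.mem_range] at ha hb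
            exact hinj a b ha.1 hb.1 hab
          · intro m hm
            simp only [Finset.mem_filter, Finset.mem_range] at hm
            obtain ⟨j, hj, rfl⟩ := hsurj m hm.1
            exact ⟨j, by simp only [Finset.mem_filter, Finset.mem_range]; exact ⟨hj, hm.2⟩, rfl⟩
        rw [hbijcard]
        have : (Finset.range N).filter (fun (m : ℕ) => Q ≤ (m : ℤ)) = Finset.Ico (u (N-1)) N := by
          ext m
          simp only [Finset.mem_filter, Finset.mem_range, Finset.mem_Ico, hQdef]
          omega
        rw [this, Nat.card_Ico]
      have hsplit : (0 : ℤ) = ((N - u (N-1) : ℕ) : ℤ) * (-Q) + ((u (N-1) : ℕ) : ℤ) * P := by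
        rw [← hsum, ← Finset.sum_filter_add_sum_filter_not (Finset.range N)
          (fun j => Q ≤ (u j : ℤ))]
        congr 1
        · rw [Finset.sum_congr rfl (fun j hj => by
            simp only [Finset.mem_filter, Finset.mem_range] at hj
            exact (hiff j hj.1).2 hj.2), Finset.sum_const, hcount, nsmul_eq_mul]
        · have hcard2 : ((Finset.range N).filter (fun j => ¬(Q ≤ (u j : ℤ)))).card = u (N-1) := by
            have := Finset.card_filter_add_card_filter_not (s := Finset.range N)
              (p := fun j => Q ≤ (u j : ℤ))
            rw [hcount, Finset.card_range] at this
            have hle : u (N-1) ≤ N := le_of_lt (hmaps (N-1) (by omega))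
            omega
          rw [Finset.sum_congr rfl (fun j hj => by
            simp only [Finset.mem_filter, Finset.mem_range] at hj
            rcases hk_mem j hj.1 with h | h
            · exact h
            · exact absurd ((hiff j hj.1).1 h) hj.2), Finset.sum_const, hcard2, nsmul_eq_mul]
      have hle : u (N-1) ≤ N := le_of_lt (hmaps (N-1) (by omega))
      have h2 : Q * P = ((N : ℤ) - Q) * Q := by
        push_cast [Nat.cast_sub hle] at hsplit
        simp only [← hQdef] at hsplit
        linarith
      have := mul_right_cancel₀ hQne (by linarith [h2] : P * Q = ((N : ℤ) - Q) * Q)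
      omega
  -- congruence u j ≡ j * P (mod N)
  have hmod : ∀ j, j < N → (N : ℤ) ∣ (u j : ℤ) - j * P := by
    intro j
    induction j with
    | zero => intro _; simp [hu0]
    | succ n ih =>
      intro hn1
      have hn : n < N := by omega
      have he : (u (n+1) : ℤ) = (u n : ℤ) + k n := by
        have := hk_add n
        rwa [Nat.mod_eq_of_lt hn1] at this
      rcases hk_mem n hn with h | h
      · have heq : (u (n+1) : ℤ) - (n+1) * P = (u n : ℤ) - n * P := by
          rw [he, h]; push_cast; ring
        push_cast
        rw [heq]; exact ih hn
      · have heq : (u (n+1) : ℤ) - (n+1) * P = ((u n : ℤ) - n * P) + (-(N : ℤ)) := by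
          rw [he, h, ← hPQ]; push_cast; ring
        push_cast
        rw [heq]
        exact dvd_add (ih hn) (dvd_neg.2 dvd_rfl)
  -- conclude coprimality
  obtain ⟨j, hj, hj1⟩ := hsurj 1 (by omega)
  have hdvd := hmod j hj
  rw [hj1] at hdvd
  set d := Nat.gcd (u 1) N with hddef
  have hd1 : (d : ℤ) ∣ P := Int.natCast_dvd_natCast.2 (Nat.gcd_dvd_left _ _)
  have hd2 : (d : ℤ) ∣ (N : ℤ) := Int.natCast_dvd_natCast.2 (Nat.gcd_dvd_right _ _)
  have hone : (d : ℤ) ∣ 1 := by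
    have h3 : (d : ℤ) ∣ (1 : ℤ) - j * P := dvd_trans hd2 (by exact_mod_cast hdvd)
    have h4 : (d : ℤ) ∣ (j : ℤ) * P := Dvd.dvd.mul_left hd1 _
    have := dvd_add h3 h4
    simpa using this
  have : d ∣ 1 := by exact_mod_cast hone
  exact Nat.dvd_one.1 this
end

section
/- If N is not a relabeling time (i.e., three distinct gap lengths occur for N points), then adding the point {Nα} splits one gap of the largest length Δ_3 into one gap of length Δ_1 and one gap of length Δ_2 (in one of the two possible orders); all other gaps are unchanged. -/
namespace ThreeGapAux

noncomputable def Fr (α : ℝ) (k : ℤ) : ℝ := Int.fract ((k : ℝ) * α)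

variable {α : ℝ} (hα : Irrational α)

lemma Fr_nonneg (k : ℤ) : 0 ≤ Fr α k := Int.fract_nonneg _
lemma Fr_lt_one (k : ℤ) : Fr α k < 1 := Int.fract_lt_one _
lemma Fr_zero : Fr α 0 = 0 := by simp [Fr]

include hα

lemma Fr_inj {j k : ℤ} (h : Fr α j = Fr α k) : j = k := by
  rcases Int.fract_eq_fract.1 h with ⟨z, hz⟩
  by_contra hne
  have hjk : ((j - k : ℤ) : ℝ) * α = (z : ℝ) := by push_cast; linarith
  have : Irrational (((j - k : ℤ) : ℝ) * α) := by
    refine (Irrational.intCast_mul hα ?_)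
    omega
  exact this.ne_int z hjk

lemma Fr_pos {k : ℤ} (hk : k ≠ 0) : 0 < Fr α k := by
  rcases lt_or_eq_of_le (Fr_nonneg (α := α) k) with h | h
  · exact h
  · exact absurd (Fr_inj hα (j := k) (k := 0) (by rw [← h, Fr_zero])) hk

lemma Fr_neg {k : ℤ} (hk : k ≠ 0) : Fr α (-k) = 1 - Fr α k := by
  have : ((-k : ℤ) : ℝ) * α = -((k : ℝ) * α) := by push_cast; ring
  rw [Fr, this, Int.fract_neg (ne_of_gt (Fr_pos hα hk))]
  rfl

omit hα

lemma Fr_add_fract (j k : ℤ) : Fr α (j + k) = Int.fract (Fr α j + Fr α k) := by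
  apply Int.fract_eq_fract.2
  refine ⟨⌊(j : ℝ) * α⌋ + ⌊(k : ℝ) * α⌋, ?_⟩
  have h1 : (j : ℝ) * α - Fr α j = ⌊(j : ℝ) * α⌋ := Int.self_sub_fract _
  have h2 : (k : ℝ) * α - Fr α k = ⌊(k : ℝ) * α⌋ := Int.self_sub_fract _
  push_cast
  push_cast at h1 h2
  linarith

lemma Fr_add_lt {j k : ℤ} (h : Fr α j + Fr α k < 1) :
    Fr α (j + k) = Fr α j + Fr α k := by
  rw [Fr_add_fract]
  exact Int.fract_eq_self.2 ⟨add_nonneg (Fr_nonneg j) (Fr_nonneg k), h⟩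

lemma Fr_add_ge {j k : ℤ} (h : 1 ≤ Fr α j + Fr α k) :
    Fr α (j + k) = Fr α j + Fr α k - 1 := by
  rw [Fr_add_fract]
  have := Int.fract_sub_intCast (Fr α j + Fr α k) 1
  rw [show ((1:ℤ):ℝ) = (1:ℝ) by norm_num] at this
  rw [← this]
  exact Int.fract_eq_self.2 ⟨by linarith,
    by have := Fr_lt_one (α := α) j; have := Fr_lt_one (α := α) k; linarith⟩

lemma fract_diff_eq (m' m : ℕ) :
    Int.fract ((m' : ℝ) * α - (m : ℝ) * α) = Fr α ((m' : ℤ) - (m : ℤ)) := by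
  unfold Fr; congr 1; push_cast; ring

include hα

lemma gapAt_le {N m m' : ℕ} (hm' : m' < N) (hne : m' ≠ m) :
    gapAt α N m ≤ Int.fract ((m' : ℝ) * α - (m : ℝ) * α) := by
  apply csInf_le ⟨0, fun d hd => le_of_lt hd.1⟩
  refine ⟨?_, m', hm', rfl⟩
  rw [fract_diff_eq]
  exact Fr_pos hα (by omega)

lemma le_gapAt {N m : ℕ} (hN : 2 ≤ N) (hm : m < N) {c : ℝ}
    (h : ∀ m' < N, m' ≠ m → c ≤ Int.fract ((m' : ℝ) * α - (m : ℝ) * α)) :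
    c ≤ gapAt α N m := by
  apply le_csInf
  · obtain ⟨m', hm', hne⟩ : ∃ m', m' < N ∧ m' ≠ m := by
      rcases Nat.eq_zero_or_pos m with h | h
      · exact ⟨1, by omega, by omega⟩
      · exact ⟨0, by omega, by omega⟩
    refine ⟨_, ?_, m', hm', rfl⟩
    rw [fract_diff_eq]
    exact Fr_pos hα (by omega)
  · rintro d ⟨hd0, m', hm', rfl⟩
    have hne : m' ≠ m := by
      rintro rfl
      rw [fract_diff_eq] at hd0
      simp at hd0
      exact absurd hd0 (by simp [Fr_zero])
    exact h m' hm' hne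

lemma gapAt_eq {N m : ℕ} (hm : m < N) (m₀ : ℕ) (hm₀ : m₀ < N) (hne : m₀ ≠ m) {g : ℝ}
    (hval : Int.fract ((m₀ : ℝ) * α - (m : ℝ) * α) = g)
    (hlb : ∀ m' < N, m' ≠ m → g ≤ Int.fract ((m' : ℝ) * α - (m : ℝ) * α)) :
    gapAt α N m = g := by
  have hN : 2 ≤ N := by omega
  exact le_antisymm (hval ▸ gapAt_le hα hm₀ hne) (le_gapAt hα hN hm hlb)


section Struct
set_option linter.unusedSectionVars false

variable {N a b : ℕ}
  (hN : 2 ≤ N) (ha : 0 < a) (haN : a < N) (hb : 0 < b) (hbN : b < N)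
  (hmin : ∀ k : ℤ, 0 < k → k < N → Fr α a ≤ Fr α k)
  (hmax : ∀ k : ℤ, 0 < k → k < N → Fr α k ≤ Fr α b)

include hα hN ha haN hb hbN hmin hmax

lemma struct1 {m : ℕ} (hm : m < N) (hc : m + a < N) :
    gapAt α N m = Fr α a := by
  apply gapAt_eq hα hm (m + a) (by omega) (by omega)
  · rw [fract_diff_eq]
    congr 1
    push_cast; ring
  · intro m' hm' hne
    rw [fract_diff_eq]
    set k : ℤ := (m' : ℤ) - m with hkdef
    have hk : k ≠ 0 := by omega
    rcases lt_trichotomy k 0 with hkneg | hk0 | hkpos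
    · set j : ℤ := -k with hjdef
      have hFk : Fr α k = 1 - Fr α j := by
        rw [show k = -j by omega, Fr_neg hα (by omega)]
      by_contra hlt
      push_neg at hlt
      have hj1 : 0 < j := by omega
      have hj2 : j + a < N := by omega
      have hl := hmin (j + a) (by omega) (by omega)
      have he : Fr α (j + (a : ℤ)) = Fr α j + Fr α a - 1 :=
        Fr_add_ge (by rw [hFk] at hlt; linarith)
      have h1 := Fr_lt_one (α := α) j
      rw [he] at hl
      rw [hFk] at hlt
      linarith
    · omega
    · exact hmin k hkpos (by omega)

lemma struct2 {m : ℕ} (hm : m < N) (hc : b ≤ m) :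
    gapAt α N m = 1 - Fr α b := by
  apply gapAt_eq hα hm (m - b) (by omega) (by omega)
  · rw [fract_diff_eq]
    have e : ((m - b : ℕ) : ℤ) - (m : ℤ) = -(b : ℤ) := by omega
    rw [e, Fr_neg hα (by omega)]
  · intro m' hm' hne
    rw [fract_diff_eq]
    set k : ℤ := (m' : ℤ) - m with hkdef
    have hk : k ≠ 0 := by omega
    rcases lt_trichotomy k 0 with hkneg | hk0 | hkpos
    · set j : ℤ := -k with hjdef
      have hFk : Fr α k = 1 - Fr α j := by
        rw [show k = -j by omega, Fr_neg hα (by omega)]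
      have := hmax j (by omega) (by omega)
      rw [hFk]
      linarith
    · omega
    · by_contra hlt
      push_neg at hlt
      have hsum := hmax ((b : ℤ) + k) (by omega) (by omega)
      have he : Fr α ((b : ℤ) + k) = Fr α b + Fr α k := Fr_add_lt (by linarith)
      have := Fr_pos hα hk
      rw [he] at hsum
      linarith

lemma struct3 {m : ℕ} (hm : m < N) (hc1 : N ≤ m + a) (hc2 : m < b) :
    gapAt α N m = Fr α a + 1 - Fr α b := by
  have hab : a ≠ b := by
    intro h
    rcases (by omega : N = 2 ∨ 3 ≤ N) with hN2 | hN3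
    · omega
    · have e1 : (1 : ℤ) = a := Fr_inj hα
        (le_antisymm (h ▸ hmax 1 (by omega) (by omega)) (hmin 1 (by omega) (by omega)))
      have e2 : (2 : ℤ) = a := Fr_inj hα
        (le_antisymm (h ▸ hmax 2 (by omega) (by omega)) (hmin 2 (by omega) (by omega)))
      omega
  have hFab : Fr α a < Fr α b :=
    lt_of_le_of_ne (hmin b (by omega) (by omega))
      (fun e => hab (by exact_mod_cast Fr_inj hα e))
  have hFa := Fr_pos hα (k := (a : ℤ)) (by omega)
  have hFb := Fr_lt_one (α := α) (b : ℤ)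
  apply gapAt_eq hα hm (m + a - b) (by omega) (by omega)
  · rw [fract_diff_eq]
    have e : ((m + a - b : ℕ) : ℤ) - (m : ℤ) = (a : ℤ) + (-(b : ℤ)) := by omega
    rw [e, Fr_add_lt (by rw [Fr_neg hα (by omega)]; linarith), Fr_neg hα (by omega)]
    ring
  · intro m' hm' hne
    rw [fract_diff_eq]
    set k : ℤ := (m' : ℤ) - m with hkdef
    have hk : k ≠ 0 := by omega
    rcases lt_trichotomy k 0 with hkneg | hk0 | hkpos
    · set j : ℤ := -k with hjdef
      have hFk : Fr α k = 1 - Fr α j := by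
        rw [show k = -j by omega, Fr_neg hα (by omega)]
      by_contra hlt
      push_neg at hlt
      rw [hFk] at hlt
      have hjb : j < b := by omega
      have h2 : Fr α j < Fr α b :=
        lt_of_le_of_ne (hmax j (by omega) (by omega))
          (fun e => by have := Fr_inj hα e; omega)
      have hl := hmin ((b : ℤ) + (-j)) (by omega) (by omega)
      have he : Fr α ((b : ℤ) + (-j)) = Fr α b + (1 - Fr α j) - 1 := by
        rw [Fr_add_ge (by rw [Fr_neg hα (by omega)]; linarith), Fr_neg hα (by omega)]
      rw [he] at hl
      linarith
    · omega
    · have hka : k < a := by omega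
      by_contra hlt
      push_neg at hlt
      have h1 : Fr α a < Fr α k :=
        lt_of_le_of_ne (hmin k (by omega) (by omega))
          (fun e => by have := Fr_inj hα e; omega)
      have hl := hmax ((a : ℤ) + (-k)) (by omega) (by omega)
      have he : Fr α ((a : ℤ) + (-k)) = Fr α a + (1 - Fr α k) := by
        rw [Fr_add_lt (by rw [Fr_neg hα (by omega)]; linarith), Fr_neg hα (by omega)]
      rw [he] at hl
      linarith

end Struct

end ThreeGapAux

open ThreeGapAux in
open Classical in
theorem new_point_splits_largest_gap (α : ℝ) (hα : Irrational α) (N : ℕ)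
    (Δ₁ Δ₂ Δ₃ : ℝ) (h12 : Δ₁ < Δ₂) (h23 : Δ₂ < Δ₃)
    (hset : gapSet α N = {Δ₁, Δ₂, Δ₃}) :
    (∃ m < N, gapAt α N m = Δ₃ ∧
      0 < Int.fract ((N : ℝ) * α - (m : ℝ) * α) ∧
      Int.fract ((N : ℝ) * α - (m : ℝ) * α) < Δ₃ ∧
      ({Int.fract ((N : ℝ) * α - (m : ℝ) * α),
        Δ₃ - Int.fract ((N : ℝ) * α - (m : ℝ) * α)} : Set ℝ) = {Δ₁, Δ₂}) ∧
    gapMult α (N + 1) = (gapMult α N).erase Δ₃ + {Δ₁, Δ₂} := by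
  classical
  have hΔcard : ({Δ₁, Δ₂, Δ₃} : Finset ℝ).card = 3 :=
    Finset.card_eq_three.2 ⟨Δ₁, Δ₂, Δ₃, by linarith, by linarith, by linarith, rfl⟩
  have hN3 : 3 ≤ N := by
    have h1 : (gapSet α N).card ≤ N :=
      le_trans Finset.card_image_le (by simp)
    rw [hset, hΔcard] at h1; omega
  have hN2 : 2 ≤ N := by omega
  obtain ⟨a, haIco, hamin⟩ := Finset.exists_min_image (Finset.Ico 1 N)
    (fun k : ℕ => Fr α (k : ℤ)) ⟨1, by simp; omega⟩
  obtain ⟨b, hbIco, hbmax⟩ := Finset.exists_max_image (Finset.Ico 1 N)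
    (fun k : ℕ => Fr α (k : ℤ)) ⟨1, by simp; omega⟩
  simp only [Finset.mem_Ico] at haIco hbIco
  have ha : 0 < a := haIco.1
  have haN : a < N := haIco.2
  have hb : 0 < b := hbIco.1
  have hbN : b < N := hbIco.2
  have hmin : ∀ k : ℤ, 0 < k → k < N → Fr α (a : ℤ) ≤ Fr α k := by
    intro k hk1 hk2
    lift k to ℕ using hk1.le
    exact hamin k (Finset.mem_Ico.2 ⟨by omega, by exact_mod_cast hk2⟩)
  have hmax : ∀ k : ℤ, 0 < k → k < N → Fr α k ≤ Fr α (b : ℤ) := by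
    intro k hk1 hk2
    lift k to ℕ using hk1.le
    exact hbmax k (Finset.mem_Ico.2 ⟨by omega, by exact_mod_cast hk2⟩)
  set δp := Fr α (a : ℤ) with hδp
  set δm := 1 - Fr α (b : ℤ) with hδm
  have hδp0 : 0 < δp := Fr_pos hα (by omega)
  have hδm0 : 0 < δm := by
    have := Fr_lt_one (α := α) (b : ℤ); rw [hδm]; linarith
  have hσeq : δp + δm = Fr α (a : ℤ) + 1 - Fr α (b : ℤ) := by
    rw [hδp, hδm]; ring
  -- gapSet is contained in the three candidate values
  have hsub : gapSet α N ⊆ {δp, δm, δp + δm} := by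
    intro x hx
    obtain ⟨m, hm, rfl⟩ := Finset.mem_image.1 hx
    rw [Finset.mem_range] at hm
    rcases (by omega : m + a < N ∨ b ≤ m ∨ (N ≤ m + a ∧ m < b)) with h | h | ⟨h1, h2⟩
    · rw [struct1 hα hN2 ha haN hb hbN hmin hmax hm h]; simp [hδp]
    · rw [struct2 hα hN2 ha haN hb hbN hmin hmax hm h]; rw [← hδm]; simp
    · rw [struct3 hα hN2 ha haN hb hbN hmin hmax hm h1 h2, ← hσeq]; simp
  -- a + b ≥ N + 1
  have habN : N + 1 ≤ a + b := by
    by_contra hcon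
    push_neg at hcon
    have hsub2 : gapSet α N ⊆ {δp, δm} := by
      intro x hx
      obtain ⟨m, hm, rfl⟩ := Finset.mem_image.1 hx
      rw [Finset.mem_range] at hm
      rcases (by omega : m + a < N ∨ b ≤ m) with h | h
      · rw [struct1 hα hN2 ha haN hb hbN hmin hmax hm h]; simp [hδp]
      · rw [struct2 hα hN2 ha haN hb hbN hmin hmax hm h]; rw [← hδm]; simp
    have h1 := Finset.card_le_card hsub2
    have h2 : ({δp, δm} : Finset ℝ).card ≤ 2 :=
      le_trans (Finset.card_insert_le _ _) (by simp)
    rw [hset, hΔcard] at h1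
    omega
  -- the three values are attained
  have hc3 : ({δp, δm, δp + δm} : Finset ℝ).card ≤ 3 := by
    refine le_trans (Finset.card_insert_le _ _) ?_
    have := Finset.card_insert_le δm ({δp + δm} : Finset ℝ)
    simp only [Finset.card_singleton] at this ⊢
    omega
  have heq : gapSet α N = {δp, δm, δp + δm} := by
    apply Finset.eq_of_subset_of_card_le hsub
    rw [hset, hΔcard]; exact hc3
  have hEq3 : ({Δ₁, Δ₂, Δ₃} : Finset ℝ) = {δp, δm, δp + δm} := hset ▸ heq
  -- identify Δ₃
  have hσp : δp < δp + δm := by linarith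
  have hσm : δm < δp + δm := by linarith
  have hσmem : δp + δm ∈ ({Δ₁, Δ₂, Δ₃} : Finset ℝ) := by rw [hEq3]; simp
  have hσeq' : δp + δm = Δ₁ ∨ δp + δm = Δ₂ ∨ δp + δm = Δ₃ := by
    simpa using hσmem
  have hΔ3mem : Δ₃ = δp ∨ Δ₃ = δm ∨ Δ₃ = δp + δm := by
    have : Δ₃ ∈ ({δp, δm, δp + δm} : Finset ℝ) := by rw [← hEq3]; simp
    simpa using this
  have hΔ3 : Δ₃ = δp + δm := by
    rcases hΔ3mem with h | h | h
    · rcases hσeq' with h' | h' | h' <;> linarith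
    · rcases hσeq' with h' | h' | h' <;> linarith
    · exact h
  -- identify {Δ₁, Δ₂}
  have hδpm : δp ≠ δm := by
    intro h
    have hsum : (1 : ℝ) ≤ Fr α (a : ℤ) + Fr α (b : ℤ) := by
      rw [hδp, hδm] at h; linarith
    have he : Fr α ((a : ℤ) + (b : ℤ)) = Fr α (a : ℤ) + Fr α (b : ℤ) - 1 :=
      Fr_add_ge hsum
    have hpos := Fr_pos hα (k := (a : ℤ) + (b : ℤ)) (by omega)
    rw [hδp, hδm] at h
    rw [he] at hpos
    linarith
  have hp2 : δp = Δ₁ ∨ δp = Δ₂ := by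
    have : δp ∈ ({Δ₁, Δ₂, Δ₃} : Finset ℝ) := by rw [hEq3]; simp
    have h' : δp = Δ₁ ∨ δp = Δ₂ ∨ δp = Δ₃ := by simpa using this
    rcases h' with h | h | h
    · exact Or.inl h
    · exact Or.inr h
    · exact absurd h (by rw [hΔ3]; linarith)
  have hm2 : δm = Δ₁ ∨ δm = Δ₂ := by
    have : δm ∈ ({Δ₁, Δ₂, Δ₃} : Finset ℝ) := by rw [hEq3]; simp
    have h' : δm = Δ₁ ∨ δm = Δ₂ ∨ δm = Δ₃ := by simpa using this
    rcases h' with h | h | h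
    · exact Or.inl h
    · exact Or.inr h
    · exact absurd h (by rw [hΔ3]; linarith)
  have hcases : (Δ₁ = δp ∧ Δ₂ = δm) ∨ (Δ₁ = δm ∧ Δ₂ = δp) := by
    rcases hp2 with h1 | h1 <;> rcases hm2 with h2 | h2
    · exact absurd (h1.trans h2.symm) hδpm
    · exact Or.inl ⟨h1.symm, h2.symm⟩
    · exact Or.inr ⟨h2.symm, h1.symm⟩
    · exact absurd (h1.trans h2.symm) hδpm
  -- the point that gets split
  set M := N - a with hMdef
  have hMN : M < N := by omega
  have hMb : M < b := by omega
  have hgapM : gapAt α N M = δp + δm := by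
    rw [hσeq]
    exact struct3 hα hN2 ha haN hb hbN hmin hmax hMN (by omega) hMb
  -- upper bound on Fr α M
  have hupper : δp + δm ≤ 1 - Fr α (M : ℤ) := by
    have h1 : gapAt α N M ≤ Int.fract (((0 : ℕ) : ℝ) * α - (M : ℝ) * α) :=
      gapAt_le hα (show (0 : ℕ) < N by omega) (show (0 : ℕ) ≠ M by omega)
    rw [fract_diff_eq, show ((0 : ℕ) : ℤ) - (M : ℤ) = -(M : ℤ) by omega,
      Fr_neg hα (by omega)] at h1
    rw [← hgapM]; linarith
  have hFM0 : 0 < Fr α (M : ℤ) := Fr_pos hα (by omega)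
  have hNfract : Fr α (N : ℤ) = Fr α (M : ℤ) + δp := by
    rw [show (N : ℤ) = (M : ℤ) + (a : ℤ) by omega]
    rw [Fr_add_lt (by rw [← hδp]; linarith), ← hδp]
  have hminN : ∀ k : ℤ, 0 < k → k < (N + 1 : ℕ) → Fr α (a : ℤ) ≤ Fr α k := by
    intro k hk1 hk2
    rcases (by omega : k < (N : ℤ) ∨ k = N) with h | h
    · exact hmin k hk1 h
    · rw [h, hNfract, ← hδp]; linarith
  have hmaxN : ∀ k : ℤ, 0 < k → k < (N + 1 : ℕ) → Fr α k ≤ Fr α (b : ℤ) := by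
    intro k hk1 hk2
    rcases (by omega : k < (N : ℤ) ∨ k = N) with h | h
    · exact hmax k hk1 h
    · rw [h, hNfract]; linarith [hupper, hδm.le, hδm.ge]
  -- new gaps
  have hg1 : gapAt α (N + 1) M = δp := by
    rw [hδp]
    exact struct1 hα (by omega) ha (by omega) hb (by omega) hminN hmaxN
      (by omega) (by omega)
  have hg2 : gapAt α (N + 1) N = δm := by
    rw [hδm]
    exact struct2 hα (by omega) ha (by omega) hb (by omega) hminN hmaxN
      (by omega) (by omega)
  have hsame : ∀ m, m < N → m ≠ M → gapAt α (N + 1) m = gapAt α N m := by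
    intro m hm hne
    rcases (by omega : m + a < N ∨ b ≤ m ∨ (N + 1 ≤ m + a ∧ m < b)) with h | h | ⟨h1, h2⟩
    · rw [struct1 hα (by omega) ha (by omega) hb (by omega) hminN hmaxN (by omega) (by omega),
        struct1 hα hN2 ha haN hb hbN hmin hmax hm h]
    · rw [struct2 hα (by omega) ha (by omega) hb (by omega) hminN hmaxN (by omega) (by omega),
        struct2 hα hN2 ha haN hb hbN hmin hmax hm h]
    · rw [struct3 hα (by omega) ha (by omega) hb (by omega) hminN hmaxN (by omega) (by omega) h2,
        struct3 hα hN2 ha haN hb hbN hmin hmax hm (by omega) h2]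
  -- multiset bookkeeping
  have hMmem : M ∈ Multiset.range N := by rw [Multiset.mem_range]; omega
  have hrange : M ::ₘ (Multiset.range N).erase M = Multiset.range N :=
    Multiset.cons_erase hMmem
  have e1 : gapMult α N = (δp + δm) ::ₘ ((Multiset.range N).erase M).map (gapAt α N) := by
    rw [gapMult]
    conv_lhs => rw [← hrange]
    rw [Multiset.map_cons, hgapM]
  have e2 : (gapMult α N).erase Δ₃ = ((Multiset.range N).erase M).map (gapAt α N) := by
    rw [e1, hΔ3, Multiset.erase_cons_head]
  have e3 : ((Multiset.range N).erase M).map (gapAt α (N + 1))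
      = ((Multiset.range N).erase M).map (gapAt α N) := by
    apply Multiset.map_congr rfl
    intro x hx
    have hnd := Multiset.nodup_range N
    have h := (hnd.mem_erase_iff).1 hx
    exact hsame x (by simpa [Multiset.mem_range] using h.2) h.1
  have e4 : gapMult α (N + 1) = δm ::ₘ δp ::ₘ (gapMult α N).erase Δ₃ := by
    rw [gapMult, Multiset.range_succ, Multiset.map_cons, hg2]
    congr 1
    conv_lhs => rw [← hrange]
    rw [Multiset.map_cons, hg1, e3, e2]
  have hfr : Int.fract ((N : ℝ) * α - (M : ℝ) * α) = δp := by
    rw [fract_diff_eq (α := α) N M, show (N : ℤ) - (M : ℤ) = (a : ℤ) by omega, ← hδp]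
  constructor
  · refine ⟨M, hMN, by rw [hgapM, hΔ3], ?_, ?_, ?_⟩
    · rw [hfr]; exact hδp0
    · rw [hfr, hΔ3]; linarith
    · rw [hfr, hΔ3, show δp + δm - δp = δm by ring]
      rcases hcases with ⟨h1, h2⟩ | ⟨h1, h2⟩
      · rw [h1, h2]
      · rw [h1, h2]; exact Set.pair_comm _ _
  · rw [e4]
    rcases hcases with ⟨h1, h2⟩ | ⟨h1, h2⟩
    · rw [h1, h2]
      show δm ::ₘ δp ::ₘ _ = _ + (δp ::ₘ δm ::ₘ 0)
      rw [add_comm, Multiset.cons_add, Multiset.cons_add, zero_add, Multiset.cons_swap]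
    · rw [h1, h2]
      show δm ::ₘ δp ::ₘ _ = _ + (δm ::ₘ δp ::ₘ 0)
      rw [add_comm, Multiset.cons_add, Multiset.cons_add, zero_add]
end

section
/- At a relabeling time N, with u_j ≡ j·u_1 (mod N) and J the index such that u_J = N - 1, one has u_{J-k} + u_{J+k} = N - 2 for all k = 1, ..., N-2 (indices taken mod N). -/
/-! ### Auxiliary lemmas about fractional parts of integer multiples -/

noncomputable def Fr (α : ℝ) (d : ℤ) : ℝ := Int.fract ((d : ℝ) * α)

lemma int_cast_bound {z : ℤ} {n : ℤ} (h1 : ((n:ℝ) - 1) < z) (h2 : (z:ℝ) < n + 1) : z = n := by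
  have b : ((n - 1 : ℤ) : ℝ) < (z:ℝ) := by push_cast; linarith
  have c : (z:ℝ) < ((n + 1 : ℤ) : ℝ) := by push_cast; linarith
  have d : n - 1 < z := by exact_mod_cast b
  have e : z < n + 1 := by exact_mod_cast c
  omega

lemma Fr_key (α : ℝ) (a b : ℤ) : ∃ z : ℤ, Fr α (a + b) = Fr α a + Fr α b + z := by
  refine ⟨⌊(a:ℝ)*α⌋ + ⌊(b:ℝ)*α⌋ - ⌊((a:ℝ)+b)*α⌋, ?_⟩
  simp only [Fr, Int.fract]; push_cast; ring

lemma Fr_nonneg (α : ℝ) (d : ℤ) : 0 ≤ Fr α d := Int.fract_nonneg _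
lemma Fr_lt_one (α : ℝ) (d : ℤ) : Fr α d < 1 := Int.fract_lt_one _
lemma Fr_zero (α : ℝ) : Fr α 0 = 0 := by simp [Fr]

lemma Fr_pos {α : ℝ} (hα : Irrational α) {d : ℤ} (hd : d ≠ 0) : 0 < Fr α d := by
  rcases lt_or_eq_of_le (Fr_nonneg α d) with h | h
  · exact h
  · exfalso
    have : Irrational ((d:ℝ) * α) := (hα.intCast_mul hd)
    have h2 : ((d:ℝ) * α) = ⌊(d:ℝ)*α⌋ := by
      have := h.symm
      simp only [Fr, Int.fract] at this
      linarith
    exact this ⟨⌊(d:ℝ)*α⌋, h2.symm⟩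

lemma Fr_sub_of_lt {α : ℝ} {a b : ℤ} (h : Fr α a < Fr α b) : Fr α (b - a) = Fr α b - Fr α a := by
  obtain ⟨z, hz⟩ := Fr_key α a (b - a)
  rw [add_sub_cancel] at hz
  have h1 := Fr_nonneg α (b - a)
  have h2 := Fr_lt_one α (b - a)
  have h3 := Fr_nonneg α a
  have h4 := Fr_lt_one α b
  have hz0 : z = 0 := int_cast_bound (n := 0) (by push_cast; linarith) (by push_cast; linarith)
  rw [hz0] at hz; push_cast at hz; linarith

lemma Fr_inj {α : ℝ} (hα : Irrational α) {a b : ℤ} (h : Fr α a = Fr α b) : a = b := by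
  by_contra hne
  obtain ⟨z, hz⟩ := Fr_key α b (a - b)
  rw [add_sub_cancel] at hz
  have h2 := Fr_lt_one α (a - b)
  have hp : 0 < Fr α (a - b) := Fr_pos hα (by omega)
  have h3 := Fr_nonneg α b
  have h4 := Fr_lt_one α a
  have hz0 : z = 0 := int_cast_bound (n := 0) (by push_cast; nlinarith) (by push_cast; nlinarith)
  rw [hz0] at hz; push_cast at hz; nlinarith

lemma Fr_neg {α : ℝ} (hα : Irrational α) {a : ℤ} (ha : a ≠ 0) : Fr α (-a) = 1 - Fr α a := by
  obtain ⟨z, hz⟩ := Fr_key α a (-a)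
  rw [add_neg_cancel, Fr_zero] at hz
  have h1 := Fr_pos hα ha
  have h2 := Fr_lt_one α a
  have h3 := Fr_pos hα (neg_ne_zero.mpr ha)
  have h4 := Fr_lt_one α (-a)
  have hz0 : z = -1 := int_cast_bound (n := -1) (by push_cast; linarith) (by push_cast; linarith)
  rw [hz0] at hz; push_cast at hz; linarith

lemma Fr_add_cases {α : ℝ} (a b : ℤ) :
    Fr α (a + b) = Fr α a + Fr α b ∨ Fr α (a + b) = Fr α a + Fr α b - 1 := by
  obtain ⟨z, hz⟩ := Fr_key α a b
  have h1 := Fr_nonneg α (a+b); have h2 := Fr_lt_one α (a+b)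
  have h3 := Fr_nonneg α a; have h4 := Fr_lt_one α a
  have h5 := Fr_nonneg α b; have h6 := Fr_lt_one α b
  have : z = 0 ∨ z = -1 := by
    have a1 : (-2:ℝ) < z := by linarith
    have a2 : (z:ℝ) < 1 := by linarith
    have b1 : (-2:ℤ) < z := by exact_mod_cast a1
    have b2 : z < 1 := by exact_mod_cast a2
    omega
  rcases this with h | h <;> rw [h] at hz <;> [left; right] <;> push_cast at hz <;> linarith

lemma FrN (α : ℝ) (m : ℕ) : Fr α (m : ℤ) = Int.fract ((m : ℝ) * α) := by
  simp [Fr]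

lemma fract_diff (α : ℝ) (m m' : ℕ) :
    Int.fract ((m' : ℝ) * α - (m : ℝ) * α) = Fr α ((m' : ℤ) - (m : ℤ)) := by
  simp only [Fr]; congr 1; push_cast; ring

lemma gapAt_eq_s8 {α : ℝ} {N m : ℕ} {c : ℝ}
    (hmem : 0 < c ∧ ∃ m' : ℕ, m' < N ∧ Int.fract ((m' : ℝ) * α - (m : ℝ) * α) = c)
    (hlb : ∀ x : ℝ, (0 < x ∧ ∃ m' : ℕ, m' < N ∧ Int.fract ((m' : ℝ) * α - (m : ℝ) * α) = x) → c ≤ x) :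
    gapAt α N m = c := by
  unfold gapAt
  apply le_antisymm
  · exact csInf_le ⟨0, fun x hx => le_of_lt hx.1⟩ hmem
  · exact le_csInf ⟨c, hmem⟩ hlb

theorem relabeling_index_sum (α : ℝ) (hα : Irrational α) (N : ℕ) (hN : 3 ≤ N)
    (u : ℕ → ℕ) (hbij : Set.BijOn u (Set.Iio N) (Set.Iio N))
    (hmono : StrictMonoOn (fun j => Int.fract ((u j : ℝ) * α)) (Set.Iio N))
    (hrel : (gapSet α N).card = 2)
    (J : ℕ) (hJ : J < N) (hJval : u J = N - 1) :
    ∀ k : ℕ, 1 ≤ k → k ≤ N - 2 →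
      uc N u ((J : ℤ) - (k : ℤ)) + uc N u ((J : ℤ) + (k : ℤ)) = N - 2 := by
  have hNZ : (0 : ℤ) < (N : ℤ) := by exact_mod_cast Nat.lt_of_lt_of_le (by norm_num) hN
  set T : Finset ℤ := Finset.Icc 1 ((N : ℤ) - 1) with hT
  have hTmem : ∀ d : ℤ, d ∈ T ↔ 1 ≤ d ∧ d ≤ (N : ℤ) - 1 := by
    intro d; rw [hT, Finset.mem_Icc]
  have hTne : T.Nonempty := ⟨1, (hTmem 1).mpr ⟨le_refl _, by omega⟩⟩
  obtain ⟨r, hrT, hrmin⟩ := Finset.exists_min_image T (Fr α) hTne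
  obtain ⟨s, hsT, hsmax⟩ := Finset.exists_max_image T (Fr α) hTne
  obtain ⟨hr1, hr2⟩ := (hTmem r).mp hrT
  obtain ⟨hs1, hs2⟩ := (hTmem s).mp hsT
  have hrmin' : ∀ d, d ∈ T → d ≠ r → Fr α r < Fr α d := by
    intro d hd hdr
    exact lt_of_le_of_ne (hrmin d hd) (fun h => hdr (Fr_inj hα h.symm))
  have hsmax' : ∀ d, d ∈ T → d ≠ s → Fr α d < Fr α s := by
    intro d hd hds
    exact lt_of_le_of_ne (hsmax d hd) (fun h => hds (Fr_inj hα h))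
  have hrltS : Fr α r < Fr α s := by
    by_cases h : r = 1
    · have h2T : (2:ℤ) ∈ T := (hTmem 2).mpr ⟨by omega, by omega⟩
      exact lt_of_lt_of_le (hrmin' 2 h2T (by omega)) (hsmax 2 h2T)
    · have h1T : (1:ℤ) ∈ T := (hTmem 1).mpr ⟨by omega, by omega⟩
      exact lt_of_lt_of_le (hrmin' 1 h1T (fun hh => h hh.symm)) (hsmax 1 h1T)
  have hrs : r ≠ s := fun h => absurd (congrArg (Fr α) h) (ne_of_lt hrltS)
  have hge : (N : ℤ) ≤ r + s := by
    by_contra hc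
    push_neg at hc
    have hmem : r + s ∈ T := (hTmem _).mpr ⟨by omega, by omega⟩
    rcases Fr_add_cases (α := α) r s with h | h
    · have := hsmax _ hmem
      have := Fr_pos hα (show r ≠ 0 by omega)
      linarith
    · have := hrmin _ hmem
      have := Fr_lt_one α s
      linarith
  have hle : r + s ≤ (N : ℤ) := by
    by_contra hc
    push_neg at hc
    -- hc : N < r + s
    have hFr0 : (0:ℝ) < Fr α r := Fr_pos hα (by omega)
    have hFs1 : Fr α s < 1 := Fr_lt_one α s
    -- gap at 0
    have hg0 : gapAt α N 0 = Fr α r := by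
      apply gapAt_eq_s8
      · refine ⟨hFr0, r.toNat, by omega, ?_⟩
        rw [fract_diff]; congr 1; push_cast; omega
      · rintro x ⟨hx, m', hm', hfx⟩
        rw [fract_diff] at hfx
        by_cases h0 : m' = 0
        · exfalso; subst h0; simp [Fr_zero] at hfx; rw [← hfx] at hx; exact lt_irrefl _ hx
        · have hmem : ((m':ℤ) - 0) ∈ T := (hTmem _).mpr ⟨by omega, by omega⟩
          rw [← hfx]; exact hrmin _ hmem
    -- gap at N-1
    have hgN : gapAt α N (N-1) = 1 - Fr α s := by
      apply gapAt_eq_s8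
      · refine ⟨by linarith, ((N:ℤ) - 1 - s).toNat, by omega, ?_⟩
        rw [fract_diff]
        have he : ((((N:ℤ) - 1 - s).toNat : ℤ)) - ((N-1 : ℕ):ℤ) = -s := by omega
        rw [he, Fr_neg hα (by omega)]
      · rintro x ⟨hx, m', hm', hfx⟩
        rw [fract_diff] at hfx
        set e : ℤ := (m':ℤ) - ((N-1 : ℕ):ℤ) with hee
        have he1 : -((N:ℤ)-1) ≤ e := by omega
        have he2 : e ≤ 0 := by omega
        have he0 : e ≠ 0 := by
          intro h; rw [h, Fr_zero] at hfx; rw [← hfx] at hx; exact lt_irrefl _ hx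
        have hmem : -e ∈ T := (hTmem _).mpr ⟨by omega, by omega⟩
        have : Fr α e = 1 - Fr α (-e) := by
          have := Fr_neg hα (show -e ≠ 0 by omega)
          rw [neg_neg] at this; linarith
        rw [← hfx, this]
        have := hsmax _ hmem
        linarith
    -- gap at N - r
    have hg3 : gapAt α N ((N:ℤ) - r).toNat = Fr α r + (1 - Fr α s) := by
      apply gapAt_eq_s8
      · refine ⟨by linarith, ((N:ℤ) - s).toNat, by omega, ?_⟩
        rw [fract_diff]
        have he : ((((N:ℤ) - s).toNat : ℤ)) - ((((N:ℤ) - r).toNat : ℤ)) = -(s - r) := by omega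
        rw [he, Fr_neg hα (by omega), Fr_sub_of_lt hrltS]
        ring
      · rintro x ⟨hx, m', hm', hfx⟩
        rw [fract_diff] at hfx
        set e : ℤ := (m':ℤ) - ((((N:ℤ) - r).toNat : ℤ)) with hee
        have he1 : -((N:ℤ)-r) ≤ e := by omega
        have he2 : e ≤ r - 1 := by omega
        have he0 : e ≠ 0 := by
          intro h; rw [h, Fr_zero] at hfx; rw [← hfx] at hx; exact lt_irrefl _ hx
        rcases le_or_gt 1 e with hpos | hneg
        · -- e ∈ [1, r-1]
          have hmem : e ∈ T := (hTmem _).mpr ⟨by omega, by omega⟩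
          have hlt : Fr α r < Fr α e := hrmin' _ hmem (by omega)
          have h1 : Fr α (e - r) = Fr α e - Fr α r := Fr_sub_of_lt hlt
          have hmem2 : r - e ∈ T := (hTmem _).mpr ⟨by omega, by omega⟩
          have h2 : Fr α (e - r) = 1 - Fr α (r - e) := by
            have := Fr_neg hα (show r - e ≠ 0 by omega)
            rw [show -(r-e) = e - r by ring] at this; linarith
          have h3 := hsmax _ hmem2
          rw [← hfx]; linarith
        · -- e ∈ [-(N-r), -1]
          have hneg1 : e ≤ -1 := by omega
          have hmem : -e ∈ T := (hTmem _).mpr ⟨by omega, by omega⟩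
          have hne : -e ≠ s := by omega
          have hlt : Fr α (-e) < Fr α s := hsmax' _ hmem hne
          have h1 : Fr α (s + e) = Fr α s - Fr α (-e) := by
            have := Fr_sub_of_lt hlt
            rw [show s - -e = s + e by ring] at this; exact this
          have hmem2 : s + e ∈ T := (hTmem _).mpr ⟨by omega, by omega⟩
          have h2 := hrmin _ hmem2
          have h3 : Fr α e = 1 - Fr α (-e) := by
            have := Fr_neg hα (show -e ≠ 0 by omega)
            rw [neg_neg] at this; linarith
          rw [← hfx]; linarith
    -- three distinct values
    set L1 := Fr α r
    set L2 := 1 - Fr α s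
    have hne12 : L1 ≠ L2 := by
      intro h
      obtain ⟨z, hz⟩ := Fr_key α r s
      have hp : 0 < Fr α (r + s) := Fr_pos hα (by omega)
      have hl : Fr α (r + s) < 1 := Fr_lt_one α _
      have hz1 : (-1:ℝ) < (z:ℝ) := by simp only [L1, L2] at h; linarith
      have hz2 : ((z:ℝ)) < 0 := by simp only [L1, L2] at h; linarith
      have : (-1:ℤ) < z := by exact_mod_cast hz1
      have : z < 0 := by exact_mod_cast hz2
      omega
    have hne13 : L1 ≠ L1 + L2 := by simp only [L2]; intro h; linarith
    have hne23 : L2 ≠ L1 + L2 := by simp only [L1]; intro h; linarith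
    have hsub : ({L1, L2, L1 + L2} : Finset ℝ) ⊆ gapSet α N := by
      intro x hx
      simp only [Finset.mem_insert, Finset.mem_singleton] at hx
      unfold gapSet
      rw [Finset.mem_image]
      rcases hx with h | h | h
      · exact ⟨0, Finset.mem_range.mpr (by omega), by rw [hg0, h]⟩
      · exact ⟨N - 1, Finset.mem_range.mpr (by omega), by rw [hgN, h]⟩
      · exact ⟨((N:ℤ) - r).toNat, Finset.mem_range.mpr (by omega), by rw [hg3, h]⟩
    have hcard3 : ({L1, L2, L1 + L2} : Finset ℝ).card = 3 := by
      rw [Finset.card_insert_of_notMem (by simp [hne12, hne13]),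
          Finset.card_insert_of_notMem (by simp [hne23]), Finset.card_singleton]
    have := Finset.card_le_card hsub
    rw [hrel, hcard3] at this
    omega
  have hsval : s = (N : ℤ) - r := by omega
  have succ_key : ∀ m : ℕ, m < N → (m : ℤ) ≠ s →
      ∃ (m' : ℕ) (L : ℝ), m' < N ∧ ((m' : ℤ) = ((m : ℤ) + r) % (N : ℤ)) ∧ 0 < L ∧
        Fr α (m' : ℤ) = Fr α (m : ℤ) + L ∧
        ∀ m'' : ℕ, m'' < N → ¬(Fr α (m : ℤ) < Fr α (m'' : ℤ) ∧ Fr α (m'' : ℤ) < Fr α (m : ℤ) + L) := by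
    intro m hm hms
    have hFr0 : (0:ℝ) < Fr α r := Fr_pos hα (by omega)
    have hFs1 : Fr α s < 1 := Fr_lt_one α s
    rcases lt_or_ge ((m:ℤ) + r) (N:ℤ) with hcase | hcase
    · -- case 1 : m + r < N, L = Fr α r
      refine ⟨m + r.toNat, Fr α r, by omega, by push_cast; rw [Int.emod_eq_of_lt (by omega) (by omega)]; omega, hFr0, ?_, ?_⟩
      · -- value
        have hmr : ((m + r.toNat : ℕ) : ℤ) = (m:ℤ) + r := by omega
        rw [hmr]
        rcases Fr_add_cases (α := α) (m:ℤ) r with h | h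
        · exact h
        · exfalso
          have hmem : (m:ℤ) + r ∈ T := (hTmem _).mpr ⟨by omega, by omega⟩
          have h2 := hrmin _ hmem
          have h3 := Fr_lt_one α (m:ℤ)
          linarith
      · -- no point in between
        rintro m'' hm'' ⟨h1, h2⟩
        set e : ℤ := (m'':ℤ) - (m:ℤ) with hee
        have hFe : Fr α e = Fr α (m'':ℤ) - Fr α (m:ℤ) := Fr_sub_of_lt h1
        have he0 : e ≠ 0 := by
          intro h; rw [h, Fr_zero] at hFe; linarith
        rcases le_or_gt 1 e with hpos | hneg
        · have hmem : e ∈ T := (hTmem _).mpr ⟨by omega, by omega⟩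
          have := hrmin _ hmem
          linarith
        · have hneg1 : e ≤ -1 := by omega
          have hmem : -e ∈ T := (hTmem _).mpr ⟨by omega, by omega⟩
          have h3 : Fr α e = 1 - Fr α (-e) := by
            have := Fr_neg hα (show -e ≠ 0 by omega)
            rw [neg_neg] at this; linarith
          have hmem2 : -e + r ∈ T := (hTmem _).mpr ⟨by omega, by omega⟩
          rcases Fr_add_cases (α := α) (-e) r with h4 | h4
          · have := Fr_lt_one α (-e + r)
            linarith
          · have := hrmin _ hmem2
            have := Fr_lt_one α (-e)
            linarith
    · -- case 2 : m + r ≥ N, i.e. m > s ; L = 1 - Fr α s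
      have hmgt : s < (m:ℤ) := by omega
      have hmemm : (m:ℤ) ∈ T := (hTmem _).mpr ⟨by omega, by omega⟩
      have hFmS : Fr α (m:ℤ) < Fr α s := hsmax' _ hmemm hms
      have hmod : ((m - s.toNat : ℕ) : ℤ) = ((m:ℤ) + r) % (N:ℤ) := by
        have hmm : ((m:ℤ) + r) % (N:ℤ) = ((m:ℤ) + r - N) % N := by
          conv_lhs => rw [show (m:ℤ)+r = ((m:ℤ)+r-(N:ℤ)) + 1*(N:ℤ) by ring]
          rw [Int.add_mul_emod_self_right]
        rw [hmm, Int.emod_eq_of_lt (by omega) (by omega)]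
        omega
      refine ⟨m - s.toNat, 1 - Fr α s, by omega, hmod, by linarith, ?_, ?_⟩
      · -- value
        have hms' : ((m - s.toNat : ℕ) : ℤ) = (m:ℤ) - s := by omega
        rw [hms']
        have h1 : Fr α (s - (m:ℤ)) = Fr α s - Fr α (m:ℤ) := Fr_sub_of_lt hFmS
        have h2 : Fr α ((m:ℤ) - s) = 1 - Fr α (s - (m:ℤ)) := by
          have := Fr_neg hα (show s - (m:ℤ) ≠ 0 by omega)
          rw [show -(s - (m:ℤ)) = (m:ℤ) - s by ring] at this; exact this
        rw [h2, h1]; ring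
      · -- no point in between
        rintro m'' hm'' ⟨h1, h2⟩
        set e : ℤ := (m'':ℤ) - (m:ℤ) with hee
        have hFe : Fr α e = Fr α (m'':ℤ) - Fr α (m:ℤ) := Fr_sub_of_lt h1
        have he0 : e ≠ 0 := by
          intro h; rw [h, Fr_zero] at hFe; linarith
        rcases le_or_gt 1 e with hpos | hneg
        · have hmem2 : e + s ∈ T := (hTmem _).mpr ⟨by omega, by omega⟩
          rcases Fr_add_cases (α := α) e s with h4 | h4
          · have := hsmax _ hmem2
            have hFe0 : 0 < Fr α e := Fr_pos hα he0
            linarith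
          · have := Fr_nonneg α (e + s)
            linarith
        · have hneg1 : e ≤ -1 := by omega
          have hmem : -e ∈ T := (hTmem _).mpr ⟨by omega, by omega⟩
          have h3 : Fr α e = 1 - Fr α (-e) := by
            have := Fr_neg hα (show -e ≠ 0 by omega)
            rw [neg_neg] at this; linarith
          have := hsmax _ hmem
          linarith
  have humem : ∀ j, j < N → u j < N := fun j hj => hbij.1 (Set.mem_Iio.mpr hj)
  have husurj : ∀ m, m < N → ∃ j, j < N ∧ u j = m := by
    intro m hm
    obtain ⟨j, hj, hjm⟩ := hbij.2.2 (Set.mem_Iio.mpr hm)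
    exact ⟨j, Set.mem_Iio.mp hj, hjm⟩
  have hmono' : ∀ i j, i < N → j < N → i < j → Fr α (u i : ℤ) < Fr α (u j : ℤ) := by
    intro i j hi hj hij
    have := hmono (Set.mem_Iio.mpr hi) (Set.mem_Iio.mpr hj) hij
    simpa [FrN] using this
  have hlabel_inj : ∀ a b : ℕ, a < N → b < N → Fr α (a : ℤ) = Fr α (b : ℤ) → a = b := by
    intro a b _ _ h
    exact_mod_cast Fr_inj hα h
  have hmono_rev : ∀ i j, i < N → j < N → Fr α (u i : ℤ) < Fr α (u j : ℤ) → i < j := by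
    intro i j hi hj h
    by_contra hc
    push_neg at hc
    rcases lt_or_eq_of_le hc with h' | h'
    · exact absurd (hmono' j i hj hi h') (by linarith)
    · rw [h'] at h; exact lt_irrefl _ h
  have hu0 : u 0 = 0 := by
    obtain ⟨i, hi, hui⟩ := husurj 0 (by omega)
    rcases Nat.eq_zero_or_pos i with h | h
    · rwa [h] at hui
    · exfalso
      have := hmono' 0 i (by omega) hi h
      rw [hui] at this
      have h0 := Fr_nonneg α (u 0 : ℤ)
      simp [Fr_zero] at this
      linarith
  have hustep : ∀ j, j + 1 < N → ((u (j + 1) : ℤ)) = ((u j : ℤ) + r) % (N : ℤ) := by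
    intro j hj
    have hmN : u j < N := humem j (by omega)
    have hms : ((u j : ℕ) : ℤ) ≠ s := by
      intro h
      have hlt := hmono' j (j+1) (by omega) hj (by omega)
      have hn : u (j+1) < N := humem _ hj
      rcases Nat.eq_zero_or_pos (u (j+1)) with h0 | h0
      · rw [h0] at hlt
        have h1 : ((0:ℕ):ℤ) = (0:ℤ) := rfl
        rw [h1, Fr_zero] at hlt
        have := Fr_nonneg α (u j : ℤ)
        linarith
      · have hmem : ((u (j+1):ℕ):ℤ) ∈ T := (hTmem _).mpr ⟨by omega, by omega⟩
        have := hsmax _ hmem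
        rw [h] at hlt
        linarith
    obtain ⟨m', L, hm'N, hm'mod, hL, hval, hbetween⟩ := succ_key (u j) hmN hms
    obtain ⟨i, hiN, hui⟩ := husurj m' hm'N
    have hji : j < i := by
      apply hmono_rev j i (by omega) hiN
      rw [hui, hval]
      linarith
    have hile : Fr α (u (j+1) : ℤ) ≤ Fr α (u i : ℤ) := by
      rcases eq_or_lt_of_le (show j+1 ≤ i by omega) with h | h
      · rw [h]
      · exact le_of_lt (hmono' _ _ hj hiN h)
    have hgt : Fr α (u j:ℤ) < Fr α (u (j+1):ℤ) := hmono' j (j+1) (by omega) hj (by omega)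
    have hnb := hbetween (u (j+1)) (humem _ hj)
    push_neg at hnb
    have hge := hnb hgt
    rw [hui, hval] at hile
    have heq : Fr α (u (j+1):ℤ) = Fr α (m':ℤ) := by rw [hval]; linarith
    have : u (j+1) = m' := hlabel_inj _ _ (humem _ hj) hm'N heq
    rw [this, hm'mod]
  have huform : ∀ j, j < N → (u j : ℤ) = ((j : ℤ) * r) % (N : ℤ) := by
    intro j
    induction j with
    | zero => intro _; simp [hu0]
    | succ n ih =>
      intro hn
      rw [hustep n hn, ih (by omega)]
      push_cast
      rw [Int.add_emod, Int.emod_emod_of_dvd _ dvd_rfl, ← Int.add_emod]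
      ring_nf
  have hucform : ∀ t : ℤ, (uc N u t : ℤ) = (t * r) % (N : ℤ) := by
    intro t
    unfold uc
    have h1 : 0 ≤ t % (N : ℤ) := Int.emod_nonneg t (by omega)
    have h2 : t % (N : ℤ) < (N : ℤ) := Int.emod_lt_of_pos t hNZ
    have h3 : ((t % (N : ℤ)).toNat) < N := by omega
    rw [huform _ h3, Int.toNat_of_nonneg h1]
    rw [Int.mul_emod, Int.emod_emod_of_dvd _ dvd_rfl, ← Int.mul_emod]
  have hJr : ((J : ℤ) * r) % (N : ℤ) = (N : ℤ) - 1 := by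
    have := huform J hJ
    rw [hJval] at this
    omega
  intro k hk1 hk2
  set a := uc N u ((J:ℤ) - k) with hadef
  set b := uc N u ((J:ℤ) + k) with hbdef
  have ha : (a:ℤ) = (((J:ℤ) - k) * r) % (N:ℤ) := hucform _
  have hb : (b:ℤ) = (((J:ℤ) + k) * r) % (N:ℤ) := hucform _
  have ha2 : (a:ℤ) < N := by rw [ha]; exact Int.emod_lt_of_pos _ hNZ
  have hb2 : (b:ℤ) < N := by rw [hb]; exact Int.emod_lt_of_pos _ hNZ
  have key : ((a:ℤ) + b) % (N:ℤ) = ((N:ℤ) - 2) % (N:ℤ) := by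
    rw [ha, hb, ← Int.add_emod]
    have h3 : (((J:ℤ)-k)*r + ((J:ℤ)+k)*r) = 2*((J:ℤ)*r) := by ring
    rw [h3]
    obtain ⟨q, hq⟩ : ∃ q, (J:ℤ)*r = (N:ℤ)*q + ((N:ℤ)-1) :=
      ⟨((J:ℤ)*r) / N, by rw [← hJr]; exact (Int.mul_ediv_add_emod _ _).symm⟩
    have h4 : 2*((J:ℤ)*r) = ((N:ℤ)-2) + (2*q+1)*(N:ℤ) := by rw [hq]; ring
    have h5 : ((N:ℤ)-2) = ((N:ℤ)-2) + 0*(N:ℤ) := by ring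
    rw [h4, Int.add_mul_emod_self_right]
  have hdvd : (N:ℤ) ∣ ((N:ℤ)-2) - ((a:ℤ) + b) := Int.ModEq.dvd key
  obtain ⟨c, hc⟩ := hdvd
  have hcases : c = 0 ∨ c = -1 := by
    by_contra hcc
    push_neg at hcc
    obtain ⟨hc1, hc2⟩ := hcc
    rcases lt_or_ge c 0 with h | h
    · have : (N:ℤ)*c ≤ (N:ℤ)*(-2) := mul_le_mul_of_nonneg_left (by omega) (by omega)
      omega
    · have : (N:ℤ)*1 ≤ (N:ℤ)*c := mul_le_mul_of_nonneg_left (by omega) (by omega)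
      omega
  rcases hcases with h | h
  · rw [h] at hc; omega
  · rw [h] at hc
    exfalso
    -- a = N-1 and b = N-1
    have haN : (a:ℤ) = (N:ℤ) - 1 := by omega
    -- a = u j1
    set j1 : ℕ := ((((J:ℤ) - k) % (N:ℤ)).toNat) with hj1def
    have hj1N : j1 < N := by
      have h1 : 0 ≤ ((J:ℤ) - k) % N := Int.emod_nonneg _ (by omega)
      have h2 : ((J:ℤ) - k) % N < N := Int.emod_lt_of_pos _ hNZ
      omega
    have hau : a = u j1 := rfl
    have huj1 : (u j1 : ℤ) = (N:ℤ) - 1 := by rw [← hau]; exact haN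
    have hJ1J : j1 = J := hbij.2.1 (Set.mem_Iio.mpr hj1N) (Set.mem_Iio.mpr hJ)
      (show u j1 = u J by omega)
    have h1 : 0 ≤ ((J:ℤ) - k) % N := Int.emod_nonneg _ (by omega)
    have hmodJ : ((J:ℤ) - k) % (N:ℤ) = (J:ℤ) % (N:ℤ) := by
      rw [Int.emod_eq_of_lt (by omega : (0:ℤ) ≤ (J:ℤ)) (by omega : (J:ℤ) < (N:ℤ))]
      omega
    have hdvd2 : (N:ℤ) ∣ (J:ℤ) - ((J:ℤ) - k) := Int.ModEq.dvd hmodJ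
    have hdvd3 : (N:ℤ) ∣ (k:ℤ) := by
      have : (J:ℤ) - ((J:ℤ) - k) = (k:ℤ) := by ring
      rwa [this] at hdvd2
    have := Int.le_of_dvd (by omega) hdvd3
    omega
end

section
/- At a relabeling time N, if J is the index with u_J = N-1, then the gap letters satisfy W_{J-1} ≠ W_J; i.e., the two gaps adjacent on the left of the point {(N-1)α} form one short gap and one long gap in some order. -/
private lemma fract_sub_fract' (a b : ℝ) :
    Int.fract (a - b) = Int.fract (Int.fract a - Int.fract b) := by
  rw [Int.fract_eq_fract]
  exact ⟨⌊a⌋ - ⌊b⌋, by unfold Int.fract; push_cast; ring⟩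

private lemma fract_pos_of_ne {α : ℝ} (hα : Irrational α) {m m' : ℕ} (h : m' ≠ m) :
    0 < Int.fract ((m' : ℝ) * α - (m : ℝ) * α) := by
  have hirr : Irrational ((m' : ℝ) * α - (m : ℝ) * α) := by
    have : ((m' : ℝ) * α - (m : ℝ) * α) = ((m' : ℤ) - (m : ℤ) : ℤ) * α := by
      push_cast; ring
    rw [this]
    exact hα.intCast_mul (by
      intro hc
      apply h
      omega)
  rw [Int.fract_pos]
  intro hc
  exact hirr.ne_int _ hc

theorem adjacent_gaps_differ (α : ℝ) (hα : Irrational α) (N : ℕ) (hN : 2 ≤ N)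
    (u : ℕ → ℕ) (hbij : Set.BijOn u (Set.Iio N) (Set.Iio N))
    (hmono : StrictMonoOn (fun j => Int.fract ((u j : ℝ) * α)) (Set.Iio N))
    (hrel : (gapSet α N).card = 2)
    (J : ℕ) (hJ : J < N) (hJval : u J = N - 1) :
    gapAt α N (uc N u ((J : ℤ) - 1)) ≠ gapAt α N (u J) := by
  set y : ℕ → ℝ := fun j => Int.fract ((u j : ℝ) * α) with hy
  have hy0 : ∀ j, 0 ≤ y j := fun j => Int.fract_nonneg _
  have hy1 : ∀ j, y j < 1 := fun j => Int.fract_lt_one _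
  have hmono' : ∀ {j k : ℕ}, j < k → k < N → y j < y k := by
    intro j k hjk hk
    exact hmono (Set.mem_Iio.2 (lt_trans hjk hk)) (Set.mem_Iio.2 hk) hjk
  have huN : ∀ {j : ℕ}, j < N → u j < N := fun {j} hj =>
    Set.mem_Iio.1 (hbij.mapsTo (Set.mem_Iio.2 hj))
  -- distance formulas
  have hDlt : ∀ j k : ℕ, j < k → k < N →
      Int.fract ((u k : ℝ) * α - (u j : ℝ) * α) = y k - y j := by
    intro j k hjk hk
    rw [fract_sub_fract']
    exact Int.fract_eq_self.2 ⟨by have := hmono' hjk hk; linarith,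
      by have := hy1 k; have := hy0 j; linarith⟩
  have hDgt : ∀ j k : ℕ, k < j → j < N →
      Int.fract ((u k : ℝ) * α - (u j : ℝ) * α) = y k - y j + 1 := by
    intro j k hkj hj
    rw [fract_sub_fract']
    have h1 : Int.fract (y k - y j) = Int.fract (y k - y j + (1 : ℤ)) :=
      (Int.fract_add_intCast _ _).symm
    rw [h1]
    push_cast
    exact Int.fract_eq_self.2 ⟨by have := hy1 j; have := hy0 k; linarith,
      by have := hmono' hkj hj; linarith⟩
  -- the cyclic successor minimizes the circular distance
  have hsucc : ∀ j : ℕ, j < N → ∀ k : ℕ, k < N → k ≠ j →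
      Int.fract ((u ((j + 1) % N) : ℝ) * α - (u j : ℝ) * α)
        ≤ Int.fract ((u k : ℝ) * α - (u j : ℝ) * α) := by
    intro j hj k hk hkj
    by_cases hj1 : j + 1 < N
    · rw [Nat.mod_eq_of_lt hj1, hDlt j (j + 1) (Nat.lt_succ_self j) hj1]
      rcases lt_or_gt_of_ne hkj with h | h
      · rw [hDgt j k h hj]
        have := hy1 (j + 1); have := hy0 k
        linarith
      · rw [hDlt j k h hk]
        rcases eq_or_lt_of_le (Nat.succ_le_of_lt h) with h2 | h2
        · have h3 : k = j + 1 := by omega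
          rw [h3]
        · have := hmono' h2 hk
          linarith
    · have hjN : j = N - 1 := by omega
      have hmod : (j + 1) % N = 0 := by
        have : j + 1 = N := by omega
        rw [this, Nat.mod_self]
      have hkj' : k < j := by omega
      rw [hmod, hDgt j 0 (by omega) hj, hDgt j k hkj' hj]
      rcases Nat.eq_zero_or_pos k with h0 | h0
      · rw [h0]
      · have := hmono' h0 hk
        linarith
  -- gap formula at u j
  have hgap : ∀ j : ℕ, j < N →
      gapAt α N (u j) = Int.fract ((u ((j + 1) % N) : ℝ) * α - (u j : ℝ) * α) := by
    intro j hj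
    have hj' : (j + 1) % N < N := Nat.mod_lt _ (by omega)
    have hne : (j + 1) % N ≠ j := by
      by_cases hj1 : j + 1 < N
      · rw [Nat.mod_eq_of_lt hj1]; omega
      · have : j + 1 = N := by omega
        rw [this, Nat.mod_self]; omega
    have hune : u ((j + 1) % N) ≠ u j := by
      intro hc
      exact hne (hbij.injOn (Set.mem_Iio.2 hj') (Set.mem_Iio.2 hj) hc)
    have hpos : 0 < Int.fract ((u ((j + 1) % N) : ℝ) * α - (u j : ℝ) * α) :=
      fract_pos_of_ne hα hune
    have hmem : Int.fract ((u ((j + 1) % N) : ℝ) * α - (u j : ℝ) * α) ∈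
        {d : ℝ | 0 < d ∧ ∃ m' : ℕ, m' < N ∧
          Int.fract ((m' : ℝ) * α - ((u j : ℕ) : ℝ) * α) = d} :=
      ⟨hpos, u ((j + 1) % N), huN hj', rfl⟩
    apply le_antisymm
    · exact csInf_le ⟨0, fun d hd => le_of_lt hd.1⟩ hmem
    · apply le_csInf ⟨_, hmem⟩
      rintro d ⟨hd0, m', hm', rfl⟩
      obtain ⟨k, hk, rfl⟩ := hbij.surjOn (Set.mem_Iio.2 hm')
      have hkne : k ≠ j := by
        rintro rfl
        simp at hd0
      exact hsucc j hj k (Set.mem_Iio.1 hk) hkne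
  -- the predecessor index
  set jp : ℕ := (((J : ℤ) - 1) % (N : ℤ)).toNat with hjp
  have hjpeq : uc N u ((J : ℤ) - 1) = u jp := rfl
  have hN0 : (0 : ℤ) < (N : ℤ) := by omega
  have hjpval : ((J : ℤ) - 1) % (N : ℤ) = if J = 0 then (N : ℤ) - 1 else (J : ℤ) - 1 := by
    rcases Nat.eq_zero_or_pos J with h0 | h0
    · simp only [h0, if_pos]
      push_cast
      rw [show (-1 : ℤ) = ((N : ℤ) - 1) + (-1) * N by ring,
        Int.add_mul_emod_self_right]
      exact Int.emod_eq_of_lt (by omega) (by omega)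
    · rw [if_neg (by omega)]
      exact Int.emod_eq_of_lt (by omega) (by omega)
  have hjpN : jp < N := by
    rcases Nat.eq_zero_or_pos J with h0 | h0
    · rw [hjp, hjpval, if_pos h0]; omega
    · rw [hjp, hjpval, if_neg (by omega)]; omega
  have hjpsucc : (jp + 1) % N = J := by
    rcases Nat.eq_zero_or_pos J with h0 | h0
    · have : jp = N - 1 := by rw [hjp, hjpval, if_pos h0]; omega
      rw [this, h0]
      have : N - 1 + 1 = N := by omega
      rw [this, Nat.mod_self]
    · have : jp = J - 1 := by rw [hjp, hjpval, if_neg (by omega)]; omega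
      rw [this]
      have h2 : J - 1 + 1 = J := by omega
      rw [h2, Nat.mod_eq_of_lt hJ]
  have hjpne : jp ≠ J := by
    rcases Nat.eq_zero_or_pos J with h0 | h0
    · rw [hjp, hjpval, if_pos h0]; omega
    · rw [hjp, hjpval, if_neg (by omega)]; omega
  -- endgame
  rw [hjpeq]
  intro hEq
  have h1 : gapAt α N (u jp) = Int.fract ((u J : ℝ) * α - (u jp : ℝ) * α) := by
    rw [hgap jp hjpN, hjpsucc]
  have h2 : gapAt α N (u J) =
      Int.fract ((u ((J + 1) % N) : ℝ) * α - (u J : ℝ) * α) := hgap J hJ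
  set p : ℕ := u jp with hp
  set t : ℕ := u ((J + 1) % N) with ht
  have hsN : (J + 1) % N < N := Nat.mod_lt _ (by omega)
  have hsne : (J + 1) % N ≠ J := by
    by_cases hj1 : J + 1 < N
    · rw [Nat.mod_eq_of_lt hj1]; omega
    · have : J + 1 = N := by omega
      rw [this, Nat.mod_self]; omega
  have hpN : p < N := huN hjpN
  have htN : t < N := huN hsN
  have hpne : p ≠ N - 1 := by
    rw [← hJval]
    intro hc
    exact hjpne (hbij.injOn (Set.mem_Iio.2 hjpN) (Set.mem_Iio.2 hJ) hc)
  have htne : t ≠ N - 1 := by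
    rw [← hJval]
    intro hc
    exact hsne (hbij.injOn (Set.mem_Iio.2 hsN) (Set.mem_Iio.2 hJ) hc)
  rw [h1, h2] at hEq
  have hcast1 : ((u J : ℝ) * α - (p : ℝ) * α) = (((u J : ℤ) - (p : ℤ) : ℤ) : ℝ) * α := by
    push_cast; ring
  have hcast2 : ((t : ℝ) * α - ((u J : ℕ) : ℝ) * α) = (((t : ℤ) - (u J : ℤ) : ℤ) : ℝ) * α := by
    push_cast; ring
  rw [hcast1, hcast2, Int.fract_eq_fract] at hEq
  obtain ⟨z, hz⟩ := hEq
  have hz' : ((((u J : ℤ) - p) - ((t : ℤ) - u J) : ℤ) : ℝ) * α = (z : ℝ) := by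
    push_cast at hz ⊢
    linarith
  have hc0 : (((u J : ℤ) - p) - ((t : ℤ) - u J)) = 0 := by
    by_contra hc
    exact (hα.intCast_mul hc).ne_int z hz'
  have huJ : (u J : ℤ) = (N : ℤ) - 1 := by
    rw [hJval]; omega
  omega
end

section
/- At a relabeling time N, for any j, the difference u_j - u_{j+1} (indices mod N) equals either -u_1 or N - u_1; equivalently, consecutive points on the circle differ in index by u_1 or u_1 - N. -/
private lemma irr_fract_pos {α : ℝ} (hα : Irrational α) {k : ℤ} (hk : k ≠ 0) :
    0 < Int.fract ((k : ℝ) * α) :=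
  Int.fract_pos.mpr ((hα.intCast_mul hk).ne_int _)

private lemma irr_fract_inj {α : ℝ} (hα : Irrational α) {k l : ℤ}
    (h : Int.fract ((k : ℝ) * α) = Int.fract ((l : ℝ) * α)) : k = l := by
  by_contra hne
  obtain ⟨z, hz⟩ := Int.fract_eq_fract.mp h
  have h2 : ((k - l : ℤ) : ℝ) * α = (z : ℝ) := by push_cast; rw [sub_mul]; exact hz
  exact ((hα.intCast_mul (sub_ne_zero.mpr hne)).ne_int z) h2

private lemma fract_nat_sub (α : ℝ) (m' m : ℕ) :
    Int.fract ((m' : ℝ) * α - (m : ℝ) * α) = Int.fract ((((m' : ℤ) - (m : ℤ) : ℤ) : ℝ) * α) := by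
  congr 1; push_cast; ring

theorem consecutive_index_difference (α : ℝ) (hα : Irrational α) (N : ℕ) (hN : 2 ≤ N)
    (u : ℕ → ℕ) (hbij : Set.BijOn u (Set.Iio N) (Set.Iio N))
    (hmono : StrictMonoOn (fun j => Int.fract ((u j : ℝ) * α)) (Set.Iio N))
    (hrel : (gapSet α N).card = 2) :
    ∀ j : ℤ, (uc N u j : ℤ) - (uc N u (j + 1) : ℤ) = -(u 1 : ℤ) ∨
      (uc N u j : ℤ) - (uc N u (j + 1) : ℤ) = (N : ℤ) - (u 1 : ℤ) := by
  classical
  have hN0 : 0 < N := by omega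
  set F : ℤ → ℝ := fun k => Int.fract ((k : ℝ) * α) with hFdef
  set x : ℕ → ℝ := fun i => Int.fract ((u i : ℝ) * α) with hxdef
  have hFpos : ∀ {k : ℤ}, k ≠ 0 → 0 < F k := fun hk => irr_fract_pos hα hk
  have hFinj : ∀ {k l : ℤ}, F k = F l → k = l := fun h => irr_fract_inj hα h
  have hinj := hbij.injOn
  have humem : ∀ {m : ℕ}, m < N → u m < N := fun hm => hbij.mapsTo hm
  have husurj : ∀ m, m < N → ∃ i, i < N ∧ u i = m := by
    intro m hm
    obtain ⟨i, hi, hui⟩ := hbij.surjOn (Set.mem_Iio.mpr hm)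
    exact ⟨i, hi, hui⟩
  have hu0 : u 0 = 0 := by
    obtain ⟨i, hi, hui⟩ := husurj 0 hN0
    rcases Nat.eq_zero_or_pos i with rfl | hipos
    · exact hui
    · exfalso
      have h1 : x 0 < x i := hmono (Set.mem_Iio.mpr hN0) (Set.mem_Iio.mpr hi) hipos
      have h2 : x i = 0 := by simp [hxdef, hui]
      have h3 : 0 ≤ x 0 := Int.fract_nonneg _
      rw [h2] at h1
      exact absurd h1 (not_lt.mpr h3)
  -- basic facts about the defining set of gapAt
  have hmemS : ∀ m m' : ℕ, m' < N → m' ≠ m →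
      Int.fract ((m' : ℝ) * α - (m : ℝ) * α) ∈
        {d : ℝ | 0 < d ∧ ∃ m' : ℕ, m' < N ∧ Int.fract ((m' : ℝ) * α - (m : ℝ) * α) = d} := by
    intro m m' hm' hne
    refine ⟨?_, m', hm', rfl⟩
    rw [fract_nat_sub]
    exact hFpos (by omega)
  have hSbdd : ∀ m : ℕ, BddBelow
      {d : ℝ | 0 < d ∧ ∃ m' : ℕ, m' < N ∧ Int.fract ((m' : ℝ) * α - (m : ℝ) * α) = d} :=
    fun m => ⟨0, fun d hd => hd.1.le⟩
  have hSfin : ∀ m : ℕ, Set.Finite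
      {d : ℝ | 0 < d ∧ ∃ m' : ℕ, m' < N ∧ Int.fract ((m' : ℝ) * α - (m : ℝ) * α) = d} := by
    intro m
    apply Set.Finite.subset (Set.Finite.image
      (fun m' : ℕ => Int.fract ((m' : ℝ) * α - (m : ℝ) * α)) (Set.finite_Iio N))
    rintro d ⟨hd, m', hm', he⟩
    exact ⟨m', Set.mem_Iio.mpr hm', he⟩
  have hSne : ∀ m : ℕ, Set.Nonempty
      {d : ℝ | 0 < d ∧ ∃ m' : ℕ, m' < N ∧ Int.fract ((m' : ℝ) * α - (m : ℝ) * α) = d} := by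
    intro m
    rcases Nat.eq_zero_or_pos m with rfl | hm0
    · exact ⟨_, hmemS 0 1 (by omega) (by omega)⟩
    · exact ⟨_, hmemS m 0 (by omega) (by omega)⟩
  have hgap_le : ∀ m, m < N → ∀ m', m' < N → m' ≠ m → gapAt α N m ≤ F ((m' : ℤ) - (m : ℤ)) := by
    intro m hm m' hm' hne
    simp only [hFdef]
    rw [← fract_nat_sub]
    exact csInf_le (hSbdd m) (hmemS m m' hm' hne)
  have hgap_mem : ∀ m, m < N → ∃ m', m' < N ∧ m' ≠ m ∧
      F ((m' : ℤ) - (m : ℤ)) = gapAt α N m ∧ 0 < gapAt α N m := by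
    intro m hm
    obtain ⟨hpos, m', hm', he⟩ := (hSne m).csInf_mem (hSfin m)
    refine ⟨m', hm', ?_, ?_, hpos⟩
    · rintro rfl
      rw [sub_self, Int.fract_zero] at he
      exact absurd he.symm (ne_of_gt hpos)
    · simp only [hFdef]; rw [← fract_nat_sub]; exact he
  -- value formula for F (u i - u j)
  have hval : ∀ i, i < N → ∀ j, j < N → i ≠ j →
      F ((u i : ℤ) - (u j : ℤ)) = if j < i then x i - x j else x i - x j + 1 := by
    intro i hi j hj hij
    have hsplit : (((u i : ℤ) - (u j : ℤ) : ℤ) : ℝ) * α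
        = (x i - x j) + ((⌊(u i : ℝ) * α⌋ - ⌊(u j : ℝ) * α⌋ : ℤ) : ℝ) := by
      simp only [hxdef, Int.fract]
      push_cast
      ring
    have step : F ((u i : ℤ) - (u j : ℤ)) = Int.fract (x i - x j) := by
      show Int.fract _ = _
      rw [hsplit]
      rw [show ((⌊(u i : ℝ) * α⌋ - ⌊(u j : ℝ) * α⌋ : ℤ) : ℝ)
        = ((⌊(u i : ℝ) * α⌋ - ⌊(u j : ℝ) * α⌋ : ℤ) : ℝ) from rfl]
      exact Int.fract_add_intCast _ _
    rw [step]
    have hxi0 : 0 ≤ x i := Int.fract_nonneg _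
    have hxi1 : x i < 1 := Int.fract_lt_one _
    have hxj0 : 0 ≤ x j := Int.fract_nonneg _
    have hxj1 : x j < 1 := Int.fract_lt_one _
    rcases lt_or_gt_of_ne hij with h | h
    · -- i < j : x i < x j
      have hlt : x i < x j := hmono (Set.mem_Iio.mpr hi) (Set.mem_Iio.mpr hj) h
      rw [if_neg (by omega)]
      have e : x i - x j = (x i - x j + 1) + ((-1 : ℤ) : ℝ) := by push_cast; ring
      rw [e, Int.fract_add_intCast, Int.fract_eq_self.mpr ⟨by linarith, by linarith⟩]
      push_cast
      ring
    · -- j < i : x j < x i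
      have hlt : x j < x i := hmono (Set.mem_Iio.mpr hj) (Set.mem_Iio.mpr hi) h
      rw [if_pos h, Int.fract_eq_self.mpr ⟨by linarith, by linarith⟩]
  -- the successor of u j in circular order is u (j+1) (cyclically)
  have hsucc : ∀ j, j < N →
      gapAt α N (u j) = F ((u (if j + 1 = N then 0 else j + 1) : ℤ) - (u j : ℤ)) := by
    intro j hj
    set j' := if j + 1 = N then 0 else j + 1 with hj'def
    have hj'N : j' < N := by rw [hj'def]; split <;> omega
    have hj'ne : j' ≠ j := by rw [hj'def]; split <;> omega
    have hune : u j' ≠ u j := fun h =>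
      hj'ne (hinj (Set.mem_Iio.mpr hj'N) (Set.mem_Iio.mpr hj) h)
    apply le_antisymm
    · exact hgap_le (u j) (humem hj) (u j') (humem hj'N) hune
    · obtain ⟨m', hm', hne, heq, hpos⟩ := hgap_mem (u j) (humem hj)
      obtain ⟨i, hiN, rfl⟩ := husurj m' hm'
      have hij : i ≠ j := fun h => hne (by rw [h])
      rw [← heq, hval i hiN j hj hij, hval j' hj'N j hj hj'ne]
      have hxi0 : 0 ≤ x i := Int.fract_nonneg _
      have hx1 : ∀ k, x k < 1 := fun k => Int.fract_lt_one _
      by_cases hcase : j + 1 = N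
      · -- j' = 0 and i < j necessarily
        have hj'0 : j' = 0 := by rw [hj'def, if_pos hcase]
        have hiltj : i < j := by omega
        rw [hj'0, if_neg (by omega), if_neg (by omega)]
        have h0i : x 0 ≤ x i :=
          (hmono.le_iff_le (Set.mem_Iio.mpr hN0) (Set.mem_Iio.mpr hiN)).mpr (by omega)
        linarith
      · have hj'1 : j' = j + 1 := by rw [hj'def, if_neg hcase]
        rw [hj'1, if_pos (by omega)]
        rcases lt_or_gt_of_ne hij with h | h
        · rw [if_neg (by omega)]
          have := hx1 (j + 1)
          linarith
        · rw [if_pos h]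
          have hle : x (j + 1) ≤ x i :=
            (hmono.le_iff_le (Set.mem_Iio.mpr (by omega)) (Set.mem_Iio.mpr hiN)).mpr (by omega)
          linarith
  -- names
  have hu1N : u 1 < N := humem (by omega)
  have hu1pos : 0 < u 1 := by
    have h : u 1 ≠ u 0 := fun h =>
      (by omega : (1 : ℕ) ≠ 0) (hinj (Set.mem_Iio.mpr (by omega)) (Set.mem_Iio.mpr hN0) h)
    omega
  set w := u (N - 1) with hwdef
  have hwN : w < N := humem (by omega)
  have hwpos : 0 < w := by
    have h : u (N - 1) ≠ u 0 := fun h =>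
      (by omega : N - 1 ≠ 0) (hinj (Set.mem_Iio.mpr (by omega)) (Set.mem_Iio.mpr hN0) h)
    omega
  set a := F ((u 1 : ℤ)) with hadef
  set b := F (-(w : ℤ)) with hbdef
  have hga : gapAt α N 0 = a := by
    have h := hsucc 0 hN0
    rw [if_neg (by omega), hu0] at h
    rw [h, hadef]
    norm_num
  have hgb : gapAt α N w = b := by
    have h := hsucc (N - 1) (by omega)
    rw [if_pos (by omega), hu0] at h
    rw [← hwdef] at h
    rw [h, hbdef]
    norm_num
  have hapos : 0 < a := hFpos (by omega)
  have hbpos : 0 < b := hFpos (by omega)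
  have ha1 : a < 1 := Int.fract_lt_one _
  have hb1 : b < 1 := Int.fract_lt_one _
  have hne_ab : a ≠ b := by
    intro h
    have := hFinj h
    omega
  -- the gap set is exactly {a, b}
  have hmemgap : ∀ m, m < N → gapAt α N m ∈ gapSet α N := fun m hm =>
    Finset.mem_image.mpr ⟨m, Finset.mem_range.mpr hm, rfl⟩
  have hsubset : ({a, b} : Finset ℝ) ⊆ gapSet α N := by
    intro d hd
    rcases Finset.mem_insert.mp hd with rfl | hd
    · rw [← hga]; exact hmemgap 0 hN0
    · rw [Finset.mem_singleton.mp hd, ← hgb]; exact hmemgap w hwN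
  have hset_eq : gapSet α N = {a, b} :=
    (Finset.eq_of_subset_of_card_le hsubset (by rw [hrel, Finset.card_pair hne_ab])).symm
  have htwo : ∀ m, m < N → gapAt α N m = a ∨ gapAt α N m = b := by
    intro m hm
    have h := hmemgap m hm
    rw [hset_eq] at h
    simpa using h
  -- characterizations
  have hA_of : ∀ m, m < N → gapAt α N m = a → m + u 1 < N := by
    intro m hm hgam
    obtain ⟨m', hm', hne, heq, _⟩ := hgap_mem m hm
    have h : (m' : ℤ) - m = (u 1 : ℤ) := hFinj (by rw [heq, hgam, hadef])
    omega
  have hB_of : ∀ m, m < N → gapAt α N m = b → w ≤ m := by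
    intro m hm hgam
    obtain ⟨m', hm', hne, heq, _⟩ := hgap_mem m hm
    have h : (m' : ℤ) - m = -(w : ℤ) := hFinj (by rw [heq, hgam, hbdef])
    omega
  have hle_a : ∀ m, m + u 1 < N → gapAt α N m ≤ a := by
    intro m hmu
    have h := hgap_le m (by omega) (m + u 1) (by omega) (by omega)
    rwa [show ((m + u 1 : ℕ) : ℤ) - (m : ℤ) = (u 1 : ℤ) from by omega] at h
  -- the key identity : u 1 + w = N
  have hkey : (u 1 : ℤ) + (w : ℤ) = N := by
    rcases lt_or_gt_of_ne hne_ab with hab | hab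
    · -- a < b
      have h1 : (u 1 : ℤ) + w ≤ N := by
        have hmN : N - u 1 < N := by omega
        have hgam : gapAt α N (N - u 1) = b := by
          rcases htwo _ hmN with h | h
          · exfalso; have := hA_of _ hmN h; omega
          · exact h
        have := hB_of _ hmN hgam
        omega
      have h2 : (N : ℤ) ≤ (u 1 : ℤ) + w := by
        by_contra hcon
        push_neg at hcon
        have h3 := hle_a w (by omega)
        rw [hgb] at h3
        linarith
      omega
    · -- b < a
      have h1 : (u 1 : ℤ) + w ≤ N := by
        have hm : w - 1 < N := by omega
        have hnb : gapAt α N (w - 1) ≠ b := by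
          intro h
          have := hB_of _ hm h
          omega
        have ha' : gapAt α N (w - 1) = a := (htwo _ hm).resolve_right hnb
        have := hA_of _ hm ha'
        omega
      have h2 : (N : ℤ) ≤ (u 1 : ℤ) + w := by
        by_contra hcon
        push_neg at hcon
        have hkN : u 1 + w < N := by omega
        have hle := hgap_le 0 hN0 (u 1 + w) hkN (by omega)
        rw [show ((u 1 + w : ℕ) : ℤ) - ((0 : ℕ) : ℤ) = (u 1 : ℤ) + (w : ℤ) from by omega,
          hga] at hle
        -- compute F (u 1 + w) = a - b
        have hYc : Int.fract ((w : ℝ) * α) = 1 - b := by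
          have hne0 : Int.fract ((w : ℝ) * α) ≠ 0 := by
            have : 0 < F ((w : ℤ)) := hFpos (by omega)
            rw [hFdef] at this
            simp only at this
            push_cast at this ⊢
            linarith
          have h := Int.fract_neg hne0
          rw [hbdef, hFdef]
          simp only
          push_cast
          rw [neg_mul]
          linarith [h]
        have hXa : Int.fract ((u 1 : ℝ) * α) = a := by
          rw [hadef, hFdef]; norm_num
        have hfk : F ((u 1 : ℤ) + (w : ℤ)) = a - b := by
          have hsplit : ((((u 1 : ℤ) + (w : ℤ)) : ℤ) : ℝ) * α
              = (Int.fract ((u 1 : ℝ) * α) + Int.fract ((w : ℝ) * α))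
                + ((⌊(u 1 : ℝ) * α⌋ + ⌊(w : ℝ) * α⌋ : ℤ) : ℝ) := by
            simp only [Int.fract]
            push_cast
            ring
          show Int.fract _ = _
          rw [hsplit, Int.fract_add_intCast, hXa, hYc]
          rw [show a + (1 - b) = (a - b) + ((1 : ℤ) : ℝ) from by push_cast; ring]
          rw [Int.fract_add_intCast, Int.fract_eq_self.mpr ⟨by linarith, by linarith⟩]
        rw [hfk] at hle
        linarith
      omega
  -- the per-index statement
  have hstep : ∀ j, j < N →
      (u j : ℤ) - (u (if j + 1 = N then 0 else j + 1) : ℤ) = -(u 1 : ℤ) ∨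
      (u j : ℤ) - (u (if j + 1 = N then 0 else j + 1) : ℤ) = (N : ℤ) - (u 1 : ℤ) := by
    intro j hj
    set j' := if j + 1 = N then 0 else j + 1 with hj'def
    have hj'N : j' < N := by rw [hj'def]; split <;> omega
    have hj'ne : j' ≠ j := by rw [hj'def]; split <;> omega
    have hune : u j' ≠ u j := fun h =>
      hj'ne (hinj (Set.mem_Iio.mpr hj'N) (Set.mem_Iio.mpr hj) h)
    have h := hsucc j hj
    rw [← hj'def] at h
    have hd : (u j' : ℤ) - (u j : ℤ) = (u 1 : ℤ) ∨ (u j' : ℤ) - (u j : ℤ) = -(w : ℤ) := by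
      rcases htwo (u j) (humem hj) with hg | hg
      · left; exact hFinj (by rw [← h, hg, hadef])
      · right; exact hFinj (by rw [← h, hg, hbdef])
    rcases hd with h' | h'
    · left; omega
    · right; omega
  -- final translation to integer indices
  intro j
  have h1 : 0 ≤ j % (N : ℤ) := Int.emod_nonneg j (by omega)
  have h2 : j % (N : ℤ) < N := Int.emod_lt_of_pos j (by omega)
  have hmod : (j + 1) % (N : ℤ) = (j % (N : ℤ) + 1) % (N : ℤ) := by
    conv_lhs => rw [Int.add_emod]
    rw [Int.emod_eq_of_lt (by omega) (by omega : (1 : ℤ) < N)]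
  have hr : ((j % (N : ℤ)).toNat) < N := by omega
  show (u ((j % (N : ℤ)).toNat) : ℤ) - (u (((j + 1) % (N : ℤ)).toNat) : ℤ) = -(u 1 : ℤ) ∨
    (u ((j % (N : ℤ)).toNat) : ℤ) - (u (((j + 1) % (N : ℤ)).toNat) : ℤ) = (N : ℤ) - (u 1 : ℤ)
  by_cases hcase : (j % (N : ℤ)).toNat = N - 1
  · have hmodval : j % (N : ℤ) = (N : ℤ) - 1 := by omega
    have hmod1 : (j + 1) % (N : ℤ) = 0 := by
      rw [hmod, hmodval]
      simp
    rw [hmod1, hcase]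
    have := hstep (N - 1) (by omega)
    rw [if_pos (by omega)] at this
    simpa using this
  · have hmod1 : (j + 1) % (N : ℤ) = j % (N : ℤ) + 1 := by
      rw [hmod]
      exact Int.emod_eq_of_lt (by omega) (by omega)
    have htn : ((j + 1) % (N : ℤ)).toNat = (j % (N : ℤ)).toNat + 1 := by omega
    rw [htn]
    have := hstep ((j % (N : ℤ)).toNat) hr
    rw [if_neg (by omega)] at this
    exact this
end
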